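/- arXiv:1602.04244 — 3 statements merged into one kernel-verified Lean document; each statement's English description precedes it below -/
import Mathlib

section
/- For n ≥ 4, M_n(v_2,…,v_{n-2}) = ∑ (-1)^{B-1} ((B-1)!/(b_2!⋯b_{n-2}!)) v_2^{b_2} ⋯ v_{n-2}^{b_{n-2}}, where the sum is over nonnegative integers b_2,…,b_{n-2} with 2b_2 + ⋯ + (n-2)b_{n-2} = n and B = b_2 + ⋯ + b_{n-2}, and where M_n is defined by the recursion M_2 = M_3 = 0, M_n = -(1/n) ∑_{j=2}^{n-2} j v_{n-j}(v_j + M_j). -/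
set_option maxHeartbeats 1000000

section
open Finset Multiset

namespace S12

lemma prod_count_cons (k : ℕ) (t : Multiset ℕ) :
    (∏ j ∈ (k ::ₘ t).toFinset, ((k ::ₘ t).count j).factorial)
      = (t.count k + 1) * ∏ j ∈ t.toFinset, (t.count j).factorial := by
  by_cases hk : k ∈ t.toFinset
  · rw [Multiset.toFinset_cons, Finset.insert_eq_self.2 hk]
    rw [← Finset.mul_prod_erase _ _ hk,
        ← Finset.mul_prod_erase _ (fun j => (t.count j).factorial) hk]
    rw [Multiset.count_cons_self, Nat.factorial_succ, mul_assoc]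
    congr 1
    congr 1
    apply Finset.prod_congr rfl
    intro j hj
    rw [Multiset.count_cons_of_ne]
    exact fun h => ((Finset.mem_erase.1 hj).1 h).elim
  · rw [Multiset.toFinset_cons, Finset.prod_insert hk]
    rw [Multiset.count_cons_self]
    have h0 : t.count k = 0 := by
      rw [Multiset.count_eq_zero]
      simpa [Multiset.mem_toFinset] using hk
    rw [h0]
    simp only [Nat.factorial_one, zero_add, one_mul]
    apply Finset.prod_congr rfl
    intro j hj
    rw [Multiset.count_cons_of_ne]
    rintro rfl
    exact hk hj

noncomputable def den (s : Multiset ℕ) : ℝ :=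
  ((∏ j ∈ s.toFinset, (s.count j).factorial : ℕ) : ℝ)

noncomputable def tt (v : ℕ → ℝ) (s : Multiset ℕ) : ℝ :=
  (-1) ^ (Multiset.card s - 1) * ((Multiset.card s - 1).factorial : ℝ) / den s
    * (s.map v).prod

noncomputable def gg (v : ℕ → ℝ) (s : Multiset ℕ) : ℝ :=
  (-1) ^ (Multiset.card s) * ((Multiset.card s).factorial : ℝ) / den s
    * (s.map v).prod

lemma den_cons (k : ℕ) (t : Multiset ℕ) :
    den (k ::ₘ t) = ((t.count k : ℝ) + 1) * den t := by
  unfold den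
  rw [prod_count_cons]
  push_cast; ring

lemma den_pos (s : Multiset ℕ) : 0 < den s := by
  unfold den
  have : 0 < ∏ j ∈ s.toFinset, (s.count j).factorial :=
    Finset.prod_pos fun j _ => Nat.factorial_pos _
  exact_mod_cast this

lemma tt_cons (v : ℕ → ℝ) (k : ℕ) (t : Multiset ℕ) :
    ((t.count k : ℝ) + 1) * tt v (k ::ₘ t) = v k * gg v t := by
  unfold tt gg
  rw [den_cons]
  rw [Multiset.card_cons, Multiset.map_cons, Multiset.prod_cons]
  simp only [Nat.add_sub_cancel]
  have h : (t.count k : ℝ) + 1 ≠ 0 := by positivity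
  have h2 : den t ≠ 0 := ne_of_gt (den_pos t)
  field_simp

lemma card_mul_tt (v : ℕ → ℝ) (s : Multiset ℕ) (hs : s ≠ 0) :
    (Multiset.card s : ℝ) * tt v s = - gg v s := by
  unfold tt gg
  obtain ⟨B, hB⟩ : ∃ B, Multiset.card s = B + 1 :=
    Nat.exists_eq_succ_of_ne_zero (by simpa using hs)
  rw [hB]
  simp only [Nat.add_sub_cancel, Nat.factorial_succ, pow_succ]
  push_cast
  ring


lemma tt_zero (v : ℕ → ℝ) : tt v 0 = 1 := by
  unfold tt den; simp

lemma gg_zero (v : ℕ → ℝ) : gg v 0 = 1 := by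
  unfold gg den; simp

def P2 (m : ℕ) : Finset (Nat.Partition m) :=
  Finset.univ.filter (fun p => ∀ x ∈ p.parts, 2 ≤ x)

noncomputable def LL (v : ℕ → ℝ) (m : ℕ) : ℝ := ∑ p ∈ P2 m, tt v p.parts
noncomputable def GG (v : ℕ → ℝ) (m : ℕ) : ℝ := ∑ p ∈ P2 m, gg v p.parts

lemma parts_eq_zero (p : Nat.Partition 0) : p.parts = 0 := by
  have hs := p.parts_sum
  ext a
  simp only [Multiset.count_zero, Multiset.count_eq_zero]
  intro ha
  have h1 := Multiset.le_sum_of_mem ha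
  have h2 := p.parts_pos ha
  omega

lemma P2_zero : P2 0 = Finset.univ := by
  apply Finset.filter_true_of_mem
  intro p _ x hx
  rw [parts_eq_zero p] at hx
  simp at hx

lemma GG_zero (v : ℕ → ℝ) : GG v 0 = 1 := by
  unfold GG
  rw [P2_zero, Finset.univ_unique, Finset.sum_singleton, parts_eq_zero, gg_zero]

lemma P2_one : P2 1 = ∅ := by
  apply Finset.filter_false_of_mem
  intro p _ h
  have hs := p.parts_sum
  have hne : p.parts ≠ 0 := by intro h0; rw [h0] at hs; simp at hs
  obtain ⟨a, ha⟩ := Multiset.exists_mem_of_ne_zero hne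
  have := Multiset.le_sum_of_mem ha
  have := h a ha
  omega

lemma GG_one (v : ℕ → ℝ) : GG v 1 = 0 := by unfold GG; rw [P2_one]; simp

lemma LL_one (v : ℕ → ℝ) : LL v 1 = 0 := by unfold LL; rw [P2_one]; simp

lemma mem_Icc_of_mem_parts {m : ℕ} {p : Nat.Partition m} (hp : p ∈ P2 m)
    {x : ℕ} (hx : x ∈ p.parts) : x ∈ Finset.Icc 2 m := by
  simp only [P2, Finset.mem_filter] at hp
  have h1 := hp.2 x hx
  have h2 := Multiset.le_sum_of_mem hx
  rw [p.parts_sum] at h2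
  exact Finset.mem_Icc.2 ⟨h1, h2⟩


def eraseP {m : ℕ} (k : ℕ) (p : Nat.Partition m) (hkp : k ∈ p.parts) :
    Nat.Partition (m - k) where
  parts := p.parts.erase k
  parts_pos := fun hx => p.parts_pos (Multiset.mem_of_mem_erase hx)
  parts_sum := by
    have h := congrArg Multiset.sum (Multiset.cons_erase hkp)
    rw [Multiset.sum_cons, p.parts_sum] at h
    omega

def consP {m : ℕ} (k : ℕ) (hk : 0 < k) (hkm : k ≤ m) (q : Nat.Partition (m - k)) :
    Nat.Partition m where
  parts := k ::ₘ q.parts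
  parts_pos := fun hx => by
    rcases Multiset.mem_cons.1 hx with rfl | hx
    · exact hk
    · exact q.parts_pos hx
  parts_sum := by rw [Multiset.sum_cons, q.parts_sum]; omega

/-- The key removal step for a fixed part size `k`. -/
lemma removal_step (v : ℕ → ℝ) (m k : ℕ) (hk : k ∈ Finset.Icc 2 m) :
    ∑ p ∈ P2 m, (p.parts.count k : ℝ) * tt v p.parts = v k * GG v (m - k) := by
  rw [Finset.mem_Icc] at hk
  classical
  rw [← Finset.sum_filter_add_sum_filter_not (P2 m) (fun p => k ∈ p.parts)]
  have h0 : ∑ p ∈ (P2 m).filter (fun p => ¬ k ∈ p.parts), (p.parts.count k : ℝ) * tt v p.parts = 0 := by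
    apply Finset.sum_eq_zero
    intro p hp
    rw [Finset.mem_filter] at hp
    rw [Multiset.count_eq_zero.2 hp.2]
    simp
  rw [h0, add_zero, GG, Finset.mul_sum]
  refine Finset.sum_bij' (i := fun p hp => eraseP k p (Finset.mem_filter.1 hp).2)
    (j := fun q hq => consP k (by omega) hk.2 q) ?_ ?_ ?_ ?_ ?_
  · -- i maps into target
    intro p hp
    simp only [P2, eraseP, Finset.mem_filter, Finset.mem_univ, true_and] at hp ⊢
    intro x hx
    exact hp.1 x (Multiset.mem_of_mem_erase hx)
  · -- j maps into source
    intro q hq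
    simp only [P2, consP, Finset.mem_filter, Finset.mem_univ, true_and] at hq ⊢
    refine ⟨fun x hx => ?_, Multiset.mem_cons_self _ _⟩
    rcases Multiset.mem_cons.1 hx with rfl | hx
    · exact hk.1
    · exact hq x hx
  · -- left inverse
    intro p hp
    apply Nat.Partition.ext
    exact Multiset.cons_erase (Finset.mem_filter.1 hp).2
  · -- right inverse
    intro q hq
    apply Nat.Partition.ext
    exact Multiset.erase_cons_head _ _
  · -- summand equality
    intro p hp
    have hce : p.parts = k ::ₘ p.parts.erase k :=
      (Multiset.cons_erase (Finset.mem_filter.1 hp).2).symm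
    show (p.parts.count k : ℝ) * tt v p.parts = v k * gg v (p.parts.erase k)
    rw [← tt_cons v k (p.parts.erase k), ← hce]
    congr 1
    conv_lhs => rw [hce, Multiset.count_cons_self]
    push_cast; ring


lemma sum_count_card {s : Multiset ℕ} {F : Finset ℕ} (hF : s.toFinset ⊆ F) :
    ∑ k ∈ F, s.count k = Multiset.card s := by
  rw [← Multiset.toFinset_sum_count_eq s]
  exact (Finset.sum_subset hF fun x _ hx => by
    rwa [Multiset.count_eq_zero, ← Multiset.mem_toFinset]).symm

lemma sum_count_sum {s : Multiset ℕ} {F : Finset ℕ} (hF : s.toFinset ⊆ F) :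
    ∑ k ∈ F, k * s.count k = s.sum := by
  have h1 : ∑ k ∈ s.toFinset, k * s.count k = s.sum := by
    conv_rhs => rw [← Multiset.toFinset_sum_count_nsmul_eq s]
    rw [Multiset.sum_sum]
    apply Finset.sum_congr rfl
    intro k _
    rw [Multiset.sum_nsmul, Multiset.sum_singleton, smul_eq_mul, mul_comm]
  rw [← h1]
  exact (Finset.sum_subset hF fun x _ hx => by
    rw [Multiset.count_eq_zero.2 (by rwa [← Multiset.mem_toFinset]), mul_zero]).symm

lemma GG_rec (v : ℕ → ℝ) (m : ℕ) (hm : 1 ≤ m) :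
    GG v m = - ∑ k ∈ Finset.Icc 2 m, v k * GG v (m - k) := by
  have h : ∀ p ∈ P2 m, gg v p.parts
      = - ∑ k ∈ Finset.Icc 2 m, (p.parts.count k : ℝ) * tt v p.parts := by
    intro p hp
    have hne : p.parts ≠ 0 := by
      intro h0
      have := p.parts_sum
      rw [h0] at this
      simp at this
      omega
    rw [← Finset.sum_mul]
    have hc : ∑ k ∈ Finset.Icc 2 m, (p.parts.count k : ℝ) = (Multiset.card p.parts : ℝ) := by
      rw [← Nat.cast_sum]
      norm_cast
      exact sum_count_card (fun x hx => mem_Icc_of_mem_parts hp (Multiset.mem_toFinset.1 hx))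
    rw [hc, card_mul_tt v _ hne, neg_neg]
  rw [GG, Finset.sum_congr rfl h, Finset.sum_neg_distrib]
  congr 1
  rw [Finset.sum_comm]
  apply Finset.sum_congr rfl
  intro k hk
  exact removal_step v m k hk

lemma LL_rec (v : ℕ → ℝ) (m : ℕ) :
    (m : ℝ) * LL v m = ∑ k ∈ Finset.Icc 2 m, (k : ℝ) * v k * GG v (m - k) := by
  have h : ∀ p ∈ P2 m, (m : ℝ) * tt v p.parts
      = ∑ k ∈ Finset.Icc 2 m, (k : ℝ) * (p.parts.count k : ℝ) * tt v p.parts := by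
    intro p hp
    rw [← Finset.sum_mul]
    congr 1
    have : ∑ k ∈ Finset.Icc 2 m, (k : ℝ) * (p.parts.count k : ℝ)
        = ((∑ k ∈ Finset.Icc 2 m, k * p.parts.count k : ℕ) : ℝ) := by push_cast; rfl
    rw [this, sum_count_sum (fun x hx => mem_Icc_of_mem_parts hp (Multiset.mem_toFinset.1 hx)),
      p.parts_sum]
  rw [LL, Finset.mul_sum, Finset.sum_congr rfl h, Finset.sum_comm]
  apply Finset.sum_congr rfl
  intro k hk
  rw [mul_assoc, ← removal_step v m k hk, Finset.mul_sum]
  exact Finset.sum_congr rfl fun p _ => by ring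


lemma swap_zero (f : ℕ → ℕ → ℝ) (hf : ∀ k j, f k j = - f j k) (n : ℕ) :
    ∑ k ∈ Finset.Icc 2 (n - 2), ∑ j ∈ Finset.Icc 2 (n - k), f k j = 0 := by
  classical
  rw [Finset.sum_sigma' (Finset.Icc 2 (n - 2)) (fun k => Finset.Icc 2 (n - k)) (fun k j => f k j)]
  have hswap : ∑ x ∈ (Finset.Icc 2 (n - 2)).sigma (fun k => Finset.Icc 2 (n - k)), f x.1 x.2
      = ∑ x ∈ (Finset.Icc 2 (n - 2)).sigma (fun k => Finset.Icc 2 (n - k)), f x.2 x.1 := by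
    apply Finset.sum_nbij' (i := fun x => ⟨x.2, x.1⟩) (j := fun x => ⟨x.2, x.1⟩)
    all_goals
      first
      | (intro x hx
         simp only [Finset.mem_sigma, Finset.mem_Icc] at hx ⊢
         omega)
      | (intro x hx; rfl)
  have : ∀ x : Σ _ : ℕ, ℕ, f x.2 x.1 = - f x.1 x.2 := fun x => hf x.2 x.1
  rw [Finset.sum_congr rfl (fun x _ => this x), Finset.sum_neg_distrib] at hswap
  linarith

lemma LL_main_rec (v : ℕ → ℝ) (n : ℕ) (hn : 4 ≤ n) :
    (n : ℝ) * LL v n = n * v n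
      - ∑ j ∈ Finset.Icc 2 (n - 2), (j : ℝ) * v (n - j) * LL v j := by
  have hsplit : Finset.Icc 2 n \ Finset.Icc 2 (n - 2) = {n - 1, n} := by
    ext x
    simp only [Finset.mem_sdiff, Finset.mem_Icc, Finset.mem_insert, Finset.mem_singleton]
    omega
  have hsub : Finset.Icc 2 (n - 2) ⊆ Finset.Icc 2 n := by
    intro x hx
    simp only [Finset.mem_Icc] at hx ⊢
    omega
  rw [LL_rec, ← Finset.sum_sdiff hsub, hsplit,
    Finset.sum_pair (show n - 1 ≠ n by omega)]
  rw [show n - (n - 1) = 1 from by omega, Nat.sub_self, GG_one, GG_zero]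
  -- remaining: ∑_{k ∈ Icc 2 (n-2)} k v k GG (n-k) = - ∑ j j v_{n-j} LL j
  have hre : ∑ j ∈ Finset.Icc 2 (n - 2), (j : ℝ) * v (n - j) * LL v j
      = ∑ k ∈ Finset.Icc 2 (n - 2), ((n - k : ℕ) : ℝ) * v k * LL v (n - k) := by
    apply Finset.sum_nbij' (i := fun j => n - j) (j := fun k => n - k)
    all_goals intro a ha
    · simp only [Finset.mem_Icc] at ha ⊢; omega
    · simp only [Finset.mem_Icc] at ha ⊢; omega
    · simp only [Finset.mem_Icc] at ha; omega
    · simp only [Finset.mem_Icc] at ha; omega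
    · simp only [Finset.mem_Icc] at ha
      rw [show n - (n - a) = a from by omega]
  rw [hre]
  have hz : ∑ k ∈ Finset.Icc 2 (n - 2),
      (v k * ((k : ℝ) * GG v (n - k)) + v k * (((n - k : ℕ) : ℝ) * LL v (n - k))) = 0 := by
    have hrw : ∀ k ∈ Finset.Icc 2 (n - 2),
        v k * ((k : ℝ) * GG v (n - k)) + v k * (((n - k : ℕ) : ℝ) * LL v (n - k))
          = ∑ j ∈ Finset.Icc 2 (n - k), v k * v j * ((j : ℝ) - (k : ℝ)) * GG v (n - k - j) := by
      intro k hk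
      simp only [Finset.mem_Icc] at hk
      rw [GG_rec v (n - k) (by omega), LL_rec v (n - k)]
      simp only [mul_neg, Finset.mul_sum]
      rw [← Finset.sum_neg_distrib, ← Finset.sum_add_distrib]
      apply Finset.sum_congr rfl
      intro j hj
      push_cast
      ring
    rw [Finset.sum_congr rfl hrw]
    exact swap_zero (fun k j => v k * v j * ((j : ℝ) - (k : ℝ)) * GG v (n - k - j)) (by
      intro k j
      show v k * v j * ((j : ℝ) - (k : ℝ)) * GG v (n - k - j)
        = -(v j * v k * ((k : ℝ) - (j : ℝ)) * GG v (n - j - k))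
      rw [show n - k - j = n - j - k from by omega]
      ring) n
  have expand := Finset.sum_add_distrib (s := Finset.Icc 2 (n - 2))
    (f := fun k => v k * ((k : ℝ) * GG v (n - k)))
    (g := fun k => v k * (((n - k : ℕ) : ℝ) * LL v (n - k)))
  rw [expand] at hz
  have h1 : ∑ k ∈ Finset.Icc 2 (n - 2), (k : ℝ) * v k * GG v (n - k)
      = ∑ k ∈ Finset.Icc 2 (n - 2), v k * ((k : ℝ) * GG v (n - k)) :=
    Finset.sum_congr rfl fun k _ => by ring
  have h2 : ∑ k ∈ Finset.Icc 2 (n - 2), ((n - k : ℕ) : ℝ) * v k * LL v (n - k)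
      = ∑ k ∈ Finset.Icc 2 (n - 2), v k * (((n - k : ℕ) : ℝ) * LL v (n - k)) :=
    Finset.sum_congr rfl fun k _ => by ring
  rw [h1, h2]
  push_cast
  linarith

lemma LL_two (v : ℕ → ℝ) : LL v 2 = v 2 := by
  have h := LL_rec v 2
  rw [show Finset.Icc 2 2 = {2} from rfl, Finset.sum_singleton, Nat.sub_self, GG_zero] at h
  norm_num at h
  linarith

lemma LL_three (v : ℕ → ℝ) : LL v 3 = v 3 := by
  have h := LL_rec v 3
  rw [show Finset.Icc 2 3 = {2, 3} from rfl, Finset.sum_pair (by norm_num)] at h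
  rw [show (3:ℕ) - 2 = 1 from rfl, Nat.sub_self, GG_one, GG_zero] at h
  norm_num at h
  linarith


lemma main_L (v M : ℕ → ℝ) (hM2 : M 2 = 0) (hM3 : M 3 = 0)
    (hMrec : ∀ n ≥ 4, M n = -(1 / (n : ℝ)) *
      ∑ j ∈ Finset.Icc 2 (n - 2), (j : ℝ) * v (n - j) * (v j + M j)) :
    ∀ n, 2 ≤ n → v n + M n = LL v n := by
  intro n
  induction n using Nat.strong_induction_on with
  | _ n ih =>
    intro hn
    rcases eq_or_ne n 2 with rfl | h2
    · rw [hM2, LL_two]; ring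
    rcases eq_or_ne n 3 with rfl | h3
    · rw [hM3, LL_three]; ring
    have hn4 : 4 ≤ n := by omega
    have hML := LL_main_rec v n hn4
    have hsum : ∑ j ∈ Finset.Icc 2 (n - 2), (j : ℝ) * v (n - j) * LL v j
        = ∑ j ∈ Finset.Icc 2 (n - 2), (j : ℝ) * v (n - j) * (v j + M j) := by
      apply Finset.sum_congr rfl
      intro j hj
      simp only [Finset.mem_Icc] at hj
      rw [ih j (by omega) hj.1]
    rw [hsum] at hML
    have hMn := hMrec n hn4
    have hne : (n : ℝ) ≠ 0 := by positivity
    rw [hMn]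
    field_simp
    linarith


def mu (n : ℕ) (b : Fin (n - 1) → ℕ) : Multiset ℕ :=
  ∑ j : Fin (n - 1), Multiset.replicate (b j) (j : ℕ)

lemma count_mu (n : ℕ) (b : Fin (n - 1) → ℕ) (k : ℕ) :
    (mu n b).count k = if h : k < n - 1 then b ⟨k, h⟩ else 0 := by
  rw [mu, Multiset.count_sum']
  by_cases h : k < n - 1
  · rw [dif_pos h]
    rw [Finset.sum_eq_single_of_mem (⟨k, h⟩ : Fin (n - 1)) (Finset.mem_univ _)]
    · rw [Multiset.count_replicate, if_pos rfl]
    · intro j _ hj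
      rw [Multiset.count_replicate, if_neg]
      intro he
      exact hj (Fin.ext he)
  · rw [dif_neg h]
    apply Finset.sum_eq_zero
    intro j _
    rw [Multiset.count_replicate, if_neg]
    intro he
    omega
  
lemma card_mu (n : ℕ) (b : Fin (n - 1) → ℕ) :
    Multiset.card (mu n b) = ∑ j : Fin (n - 1), b j := by
  rw [mu, Multiset.card_sum]
  simp [Multiset.card_replicate]

lemma sum_mu (n : ℕ) (b : Fin (n - 1) → ℕ) :
    (mu n b).sum = ∑ j : Fin (n - 1), (j : ℕ) * b j := by
  rw [mu, Multiset.sum_sum]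
  apply Finset.sum_congr rfl
  intro j _
  rw [Multiset.sum_replicate, smul_eq_mul, mul_comm]

lemma map_mu_prod (v : ℕ → ℝ) (n : ℕ) (b : Fin (n - 1) → ℕ) :
    ((mu n b).map v).prod = ∏ j : Fin (n - 1), v (j : ℕ) ^ b j := by
  rw [mu, show Multiset.map v (∑ j : Fin (n - 1), Multiset.replicate (b j) (j : ℕ))
      = Multiset.mapAddMonoidHom v (∑ j : Fin (n - 1), Multiset.replicate (b j) (j : ℕ)) from rfl,
    map_sum (Multiset.mapAddMonoidHom v), Multiset.prod_sum]
  apply Finset.prod_congr rfl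
  intro j _
  show ((Multiset.replicate (b j) ((j : ℕ))).map v).prod = _
  rw [Multiset.map_replicate, Multiset.prod_replicate]

lemma toFinset_mu_sub (n : ℕ) (b : Fin (n - 1) → ℕ) :
    (mu n b).toFinset ⊆ Finset.range (n - 1) := by
  intro k hk
  rw [Multiset.mem_toFinset, ← Multiset.count_pos, count_mu] at hk
  rw [Finset.mem_range]
  by_contra h
  rw [dif_neg h] at hk
  omega

lemma den_mu (n : ℕ) (b : Fin (n - 1) → ℕ) :
    den (mu n b) = ((∏ j : Fin (n - 1), (b j).factorial : ℕ) : ℝ) := by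
  rw [den]
  congr 1
  rw [Finset.prod_subset (toFinset_mu_sub n b) (fun k _ hk => by
    rw [Multiset.count_eq_zero.2 (fun hm => hk (Multiset.mem_toFinset.2 hm))]
    rfl)]
  rw [← Fin.prod_univ_eq_prod_range (fun k => ((mu n b).count k).factorial) (n - 1)]
  apply Finset.prod_congr rfl
  intro j _
  rw [count_mu, dif_pos j.isLt, Fin.eta]

lemma card_le_sum_of_one_le {s : Multiset ℕ} (h : ∀ x ∈ s, 1 ≤ x) :
    Multiset.card s ≤ s.sum := by
  induction s using Multiset.induction with
  | empty => simp
  | cons a t ih =>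
    rw [Multiset.card_cons, Multiset.sum_cons]
    have ha := h a (Multiset.mem_cons_self a t)
    have := ih (fun x hx => h x (Multiset.mem_cons_of_mem hx))
    omega

lemma parts_le {n : ℕ} (hn : 4 ≤ n) {p : Nat.Partition n} (hp : p ∈ P2 n)
    (hne : p.parts ≠ {n}) : ∀ x ∈ p.parts, x ≤ n - 2 := by
  simp only [P2, Finset.mem_filter] at hp
  intro x hx
  by_contra hbig
  have hxn : x ≤ n := by
    have := Multiset.le_sum_of_mem hx
    rw [p.parts_sum] at this
    exact this
  have hsum_erase : (p.parts.erase x).sum + x = n := by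
    have h := congrArg Multiset.sum (Multiset.cons_erase hx)
    rw [Multiset.sum_cons, p.parts_sum] at h
    omega
  have herase : p.parts.erase x = 0 := by
    by_contra h0
    obtain ⟨y, hy⟩ := Multiset.exists_mem_of_ne_zero h0
    have h2y := hp.2 y (Multiset.mem_of_mem_erase hy)
    have := Multiset.le_sum_of_mem hy
    omega
  have : p.parts = {x} := by
    have h := Multiset.cons_erase hx
    rw [herase] at h
    exact h.symm
  have hxn' : x = n := by
    have hs := p.parts_sum
    rw [this] at hs
    simpa using hs
  exact hne (by rw [this, hxn'])

def muP (n : ℕ) (b : Fin (n - 1) → ℕ) (h2 : ∀ j : Fin (n - 1), (j : ℕ) < 2 → b j = 0)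
    (hsum : ∑ j : Fin (n - 1), (j : ℕ) * b j = n) : Nat.Partition n where
  parts := mu n b
  parts_pos := by
    intro x hx
    rw [mu, Multiset.mem_sum] at hx
    obtain ⟨j, _, hj⟩ := hx
    obtain ⟨hbj, hxj⟩ := Multiset.mem_replicate.1 hj
    subst hxj
    by_contra h
    exact hbj (h2 j (by omega))
  parts_sum := by rw [sum_mu]; exact hsum

lemma two_le_of_mem_mu {n : ℕ} {b : Fin (n - 1) → ℕ}
    (h2 : ∀ j : Fin (n - 1), (j : ℕ) < 2 → b j = 0) {x : ℕ} (hx : x ∈ mu n b) : 2 ≤ x := by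
  rw [mu, Multiset.mem_sum] at hx
  obtain ⟨j, _, hj⟩ := hx
  obtain ⟨hbj, rfl⟩ := Multiset.mem_replicate.1 hj
  by_contra h
  exact hbj (h2 j (by omega))


lemma tt_singleton (v : ℕ → ℝ) (k : ℕ) : tt v ({k} : Multiset ℕ) = v k := by
  unfold tt den
  simp

def pn (n : ℕ) (hn : 4 ≤ n) : Nat.Partition n where
  parts := {n}
  parts_pos := by intro x hx; rw [Multiset.mem_singleton] at hx; omega
  parts_sum := by simp

lemma pn_mem (n : ℕ) (hn : 4 ≤ n) : pn n hn ∈ P2 n := by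
  simp only [P2, pn, Finset.mem_filter, Finset.mem_univ, true_and]
  intro x hx
  rw [Multiset.mem_singleton] at hx
  omega

lemma conversion (v : ℕ → ℝ) (n : ℕ) (hn : 4 ≤ n) :
    (∑ b ∈ (Fintype.piFinset fun _ : Fin (n - 1) => Finset.range (n + 1)).filter
        (fun b : Fin (n - 1) → ℕ =>
          (∑ j : Fin (n - 1), (j : ℕ) * b j = n) ∧
          ∀ j : Fin (n - 1), (j : ℕ) < 2 → b j = 0),
      (-1 : ℝ) ^ ((∑ j : Fin (n - 1), b j) - 1) *
        ((∑ j : Fin (n - 1), b j) - 1).factorial /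
        (∏ j : Fin (n - 1), (b j).factorial : ℕ) *
        ∏ j : Fin (n - 1), v (j : ℕ) ^ b j)
    = LL v n - v n := by
  classical
  have hsplit : LL v n = tt v (pn n hn).parts + ∑ p ∈ (P2 n).erase (pn n hn), tt v p.parts :=
    (Finset.add_sum_erase _ _ (pn_mem n hn)).symm
  have hpn : tt v (pn n hn).parts = v n := tt_singleton v n
  rw [hsplit, hpn]
  have key : (∑ b ∈ (Fintype.piFinset fun _ : Fin (n - 1) => Finset.range (n + 1)).filter
        (fun b : Fin (n - 1) → ℕ =>
          (∑ j : Fin (n - 1), (j : ℕ) * b j = n) ∧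
          ∀ j : Fin (n - 1), (j : ℕ) < 2 → b j = 0),
      (-1 : ℝ) ^ ((∑ j : Fin (n - 1), b j) - 1) *
        ((∑ j : Fin (n - 1), b j) - 1).factorial /
        (∏ j : Fin (n - 1), (b j).factorial : ℕ) *
        ∏ j : Fin (n - 1), v (j : ℕ) ^ b j)
      = ∑ p ∈ (P2 n).erase (pn n hn), tt v p.parts := by
    refine Finset.sum_bij'
      (i := fun b hb => muP n b (Finset.mem_filter.1 hb).2.2 (Finset.mem_filter.1 hb).2.1)
      (j := fun p hp => fun j : Fin (n - 1) => p.parts.count (j : ℕ)) ?_ ?_ ?_ ?_ ?_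
    · -- into target
      intro b hb
      obtain ⟨hpi, hsum, h2⟩ := Finset.mem_filter.1 hb
      rw [Finset.mem_erase]
      constructor
      · intro he
        have hc := congrArg (fun p : Nat.Partition n => p.parts.count n) he
        simp only [muP, pn] at hc
        rw [count_mu, dif_neg (by omega), Multiset.count_singleton, if_pos rfl] at hc
        exact absurd hc (by omega)
      · simp only [P2, Finset.mem_filter, Finset.mem_univ, true_and]
        intro x hx
        exact two_le_of_mem_mu h2 hx
    · -- into source
      intro p hp
      rw [Finset.mem_erase] at hp
      obtain ⟨hne, hp2⟩ := hp
      have h2 : ∀ x ∈ p.parts, 2 ≤ x := by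
        have := (Finset.mem_filter.1 hp2).2
        exact this
      have hle : ∀ x ∈ p.parts, x ≤ n - 2 := by
        apply parts_le hn hp2
        intro he
        exact hne (Nat.Partition.ext he)
      rw [Finset.mem_filter]
      refine ⟨?_, ?_, ?_⟩
      · rw [Fintype.mem_piFinset]
        intro j
        show p.parts.count (j : ℕ) ∈ Finset.range (n + 1)
        rw [Finset.mem_range]
        have hcle : p.parts.count (j : ℕ) ≤ Multiset.card p.parts :=
          Multiset.count_le_card _ _
        have hcs : Multiset.card p.parts ≤ p.parts.sum :=
          card_le_sum_of_one_le (fun x hx => by have := h2 x hx; omega)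
        rw [p.parts_sum] at hcs
        omega
      · rw [Fin.sum_univ_eq_sum_range (fun k => k * p.parts.count k) (n - 1)]
        rw [sum_count_sum (F := Finset.range (n - 1)) (fun x hx => by
          rw [Finset.mem_range]
          have := hle x (Multiset.mem_toFinset.1 hx)
          omega)]
        exact p.parts_sum
      · intro j hj
        rw [Multiset.count_eq_zero]
        intro hm
        have := h2 _ hm
        omega
    · -- left inverse
      intro b hb
      funext j
      show (muP n b _ _).parts.count (j : ℕ) = b j
      simp only [muP]
      rw [count_mu, dif_pos j.isLt, Fin.eta]
    · -- right inverse
      intro p hp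
      apply Nat.Partition.ext
      show mu n _ = p.parts
      rw [Finset.mem_erase] at hp
      obtain ⟨hne, hp2⟩ := hp
      have hle : ∀ x ∈ p.parts, x ≤ n - 2 :=
        parts_le hn hp2 (fun he => hne (Nat.Partition.ext he))
      ext k
      rw [count_mu]
      by_cases h : k < n - 1
      · rw [dif_pos h]
      · rw [dif_neg h]
        symm
        rw [Multiset.count_eq_zero]
        intro hm
        have := hle k hm
        omega
    · -- summands
      intro b hb
      show _ = tt v (muP n b _ _).parts
      simp only [muP]
      rw [tt, den_mu, card_mu, map_mu_prod]
  rw [key]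
  ring

end S12
end

open Finset

/-- With `M` defined by the recursion `M_2 = M_3 = 0`,
`M_n = -(1/n) ∑_{j=2}^{n-2} j v_{n-j}(v_j + M_j)`, for every `n ≥ 4`:
`M_n = ∑_{2b₂+⋯+(n-2)b_{n-2} = n} (-1)^{B-1} (B-1)!/(b₂!⋯b_{n-2}!) v₂^{b₂}⋯v_{n-2}^{b_{n-2}}`
where `B = b₂ + ⋯ + b_{n-2}`. -/
theorem stmt12 (v M : ℕ → ℝ)
    (hM2 : M 2 = 0) (hM3 : M 3 = 0)
    (hMrec : ∀ n ≥ 4, M n = -(1 / (n : ℝ)) *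
      ∑ j ∈ Finset.Icc 2 (n - 2), (j : ℝ) * v (n - j) * (v j + M j)) :
    ∀ n ≥ 4, M n =
      ∑ b ∈ (Fintype.piFinset fun _ : Fin (n - 1) => Finset.range (n + 1)).filter
          (fun b : Fin (n - 1) → ℕ =>
            (∑ j : Fin (n - 1), (j : ℕ) * b j = n) ∧
            ∀ j : Fin (n - 1), (j : ℕ) < 2 → b j = 0),
        (-1 : ℝ) ^ ((∑ j : Fin (n - 1), b j) - 1) *
          ((∑ j : Fin (n - 1), b j) - 1).factorial /
          (∏ j : Fin (n - 1), (b j).factorial : ℕ) *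
          ∏ j : Fin (n - 1), v (j : ℕ) ^ b j := by
  intro n hn
  rw [S12.conversion v n hn, ← S12.main_L v M hM2 hM3 hMrec n (by omega)]
  ring
end

section
/- With notation as above (u characteristic function of S ∋ 1, v_n = u(n)-u(n-1), P the prime zeta function, M_n the partition polynomials), log h(E(S)) = P(2)v_2 + P(3)v_3 + ∑_{n=4}^∞ P(n)(v_n + M_n(v_2,…,v_{n-2})). -/
open scoped Classical

open Finset

lemma sum_aux : ∀ n : ℕ, 2 ≤ n →
    ∑ j ∈ Icc 2 (n-2), (j:ℝ) * (1.7:ℝ)^j ≤ (n:ℝ) * (1.7:ℝ)^n - n := by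
  intro n hn
  induction n, hn using Nat.le_induction with
  | base => norm_num
  | succ n hn ih =>
    rcases Nat.lt_or_ge n 3 with h3 | h3
    · interval_cases n
      · norm_num
    · have hIcc : Icc 2 (n+1-2) = Icc 2 (n-2) ∪ {n-1} := by
        ext j; simp [Finset.mem_Icc, Finset.mem_union]; omega
      have hdisj : Disjoint (Icc 2 (n-2)) ({n-1} : Finset ℕ) := by
        simp [Finset.disjoint_singleton_right]; omega
      rw [hIcc, Finset.sum_union hdisj, Finset.sum_singleton]
      have h1 : (1:ℝ) ≤ (1.7:ℝ)^(n-1) := one_le_pow₀ (by norm_num)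
      have hpow : (1.7:ℝ)^(n+1) = 1.7^n * 1.7 := pow_succ _ _
      have hpow2 : (1.7:ℝ)^n = 1.7^(n-1) * 1.7 := by
        rw [← pow_succ]; congr 1; omega
      have hcast : ((n-1 : ℕ):ℝ) = (n:ℝ) - 1 := by
        have : (1:ℕ) ≤ n := by omega
        push_cast [this]; ring
      have hcast2 : ((n+1 : ℕ):ℝ) = (n:ℝ) + 1 := by push_cast; ring
      rw [hcast, hcast2]
      have hn3 : (3:ℝ) ≤ n := by exact_mod_cast h3
      nlinarith [ih, h1, pow_nonneg (by norm_num : (0:ℝ) ≤ 1.7) n]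
lemma cbound (w c : ℕ → ℝ) (hwb : ∀ n, |w n| ≤ 1)
    (hc0 : c 0 = 0) (hc1 : c 1 = 0) (hc2 : |c 2| ≤ 1) (hc3 : |c 3| ≤ 1)
    (hrec : ∀ n : ℕ, 4 ≤ n → (n:ℝ) * c n = (n:ℝ) * w n
        - ∑ j ∈ Icc 2 (n-2), (j:ℝ) * c j * w (n-j)) :
    ∀ n, |c n| ≤ (1.7:ℝ)^n := by
  intro n
  induction n using Nat.strong_induction_on with
  | _ n ih =>
    match n, ih with
    | 0, _ => rw [hc0]; simp
    | 1, _ => rw [hc1]; simp; norm_num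
    | 2, _ => exact hc2.trans (one_le_pow₀ (by norm_num))
    | 3, _ => exact hc3.trans (one_le_pow₀ (by norm_num))
    | (m+4), ih =>
      have h4 : 4 ≤ m + 4 := by omega
      have hn0 : (0:ℝ) < ((m+4 : ℕ):ℝ) := by positivity
      have key : ((m+4:ℕ):ℝ) * |c (m+4)| ≤ ((m+4:ℕ):ℝ) * (1.7:ℝ)^(m+4) := by
        calc ((m+4:ℕ):ℝ) * |c (m+4)| = |((m+4:ℕ):ℝ) * c (m+4)| := by
              rw [abs_mul, abs_of_pos hn0]
          _ = |((m+4:ℕ):ℝ) * w (m+4)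
                - ∑ j ∈ Icc 2 (m+4-2), (j:ℝ) * c j * w (m+4-j)| := by
              rw [hrec _ h4]
          _ ≤ |((m+4:ℕ):ℝ) * w (m+4)|
                + |∑ j ∈ Icc 2 (m+4-2), (j:ℝ) * c j * w (m+4-j)| := abs_sub _ _
          _ ≤ ((m+4:ℕ):ℝ) * 1 + ∑ j ∈ Icc 2 (m+4-2), (j:ℝ) * (1.7:ℝ)^j := by
              gcongr
              · rw [abs_mul, abs_of_pos hn0]; gcongr; exact hwb _
              · refine (Finset.abs_sum_le_sum_abs _ _).trans (Finset.sum_le_sum ?_)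
                intro j hj
                rw [Finset.mem_Icc] at hj
                have hjlt : j < m + 4 := by omega
                calc |(j:ℝ) * c j * w (m+4-j)| = (j:ℝ) * |c j| * |w (m+4-j)| := by
                      rw [abs_mul, abs_mul, Nat.abs_cast]
                  _ ≤ (j:ℝ) * (1.7:ℝ)^j * 1 := by
                      have h1 : (j:ℝ) * |c j| ≤ (j:ℝ) * (1.7:ℝ)^j :=
                        mul_le_mul_of_nonneg_left (ih j hjlt) (Nat.cast_nonneg j)
                      exact mul_le_mul h1 (hwb _) (abs_nonneg _) (by positivity)
                  _ = (j:ℝ) * (1.7:ℝ)^j := by ring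
          _ ≤ ((m+4:ℕ):ℝ) * 1 + (((m+4:ℕ):ℝ) * (1.7:ℝ)^(m+4) - ((m+4:ℕ):ℝ)) :=
              by gcongr; exact sum_aux _ (by omega)
          _ = ((m+4:ℕ):ℝ) * (1.7:ℝ)^(m+4) := by ring
      exact le_of_mul_le_mul_left key hn0

lemma summable_pow_aux (a : ℕ → ℝ) (ha : ∀ n, |a n| ≤ (1.7:ℝ)^n) (y : ℝ)
    (hy : |y| ≤ 0.55) : Summable (fun n => a n * y^n) := by
  refine Summable.of_norm_bounded
    (summable_geometric_of_lt_one (r := (0.935:ℝ)) (by norm_num) (by norm_num)) ?_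
  intro n
  rw [Real.norm_eq_abs, abs_mul, abs_pow]
  calc |a n| * |y|^n ≤ (1.7:ℝ)^n * (0.55:ℝ)^n :=
        mul_le_mul (ha n) (pow_le_pow_left₀ (abs_nonneg y) hy n)
          (pow_nonneg (abs_nonneg y) n) (by positivity)
  _ = (0.935:ℝ)^n := by rw [← mul_pow]; norm_num

lemma deriv_bound_aux (a : ℕ → ℝ) (ha : ∀ n, |a n| ≤ (1.7:ℝ)^n) (y : ℝ)
    (hy : |y| ≤ 0.55) (n : ℕ) :
    ‖a n * ((n:ℝ) * y^(n-1))‖ ≤ 2 * ((n:ℝ)+1) * (0.935:ℝ)^n := by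
  rw [Real.norm_eq_abs, abs_mul, abs_mul, Nat.abs_cast, abs_pow]
  match n with
  | 0 => norm_num
  | (m+1) =>
    have h2 : |y|^(m+1-1) ≤ (0.55:ℝ)^m := by
      simpa using pow_le_pow_left₀ (abs_nonneg y) hy m
    calc |a (m+1)| * (((m+1:ℕ):ℝ) * |y|^(m+1-1))
        ≤ (1.7:ℝ)^(m+1) * (((m+1:ℕ):ℝ) * (0.55:ℝ)^m) := by
          refine mul_le_mul (ha _) ?_ (by positivity) (by positivity)
          exact mul_le_mul_of_nonneg_left h2 (by positivity)
      _ = 1.7 * ((m:ℝ)+1) * ((0.935:ℝ))^m := by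
          have : (1.7:ℝ)*0.55 = 0.935 := by norm_num
          rw [← this, mul_pow, pow_succ]; push_cast; ring
      _ ≤ 2 * (((m+1:ℕ):ℝ)+1) * (0.935:ℝ)^(m+1) := by
          rw [pow_succ]; push_cast
          nlinarith [pow_nonneg (by norm_num : (0:ℝ) ≤ 0.935) m, Nat.cast_nonneg (α := ℝ) m]

lemma summable_u_aux : Summable (fun n : ℕ => 2 * ((n:ℝ)+1) * (0.935:ℝ)^n) := by
  have h1 : Summable (fun n : ℕ => (n:ℝ) * (0.935:ℝ)^n) := by
    simpa using summable_pow_mul_geometric_of_norm_lt_one (R := ℝ) 1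
      (r := 0.935) (by rw [Real.norm_eq_abs]; rw [abs_of_pos] <;> norm_num)
  have h2 : Summable (fun n : ℕ => (0.935:ℝ)^n) :=
    summable_geometric_of_lt_one (by norm_num) (by norm_num)
  exact ((h1.add h2).mul_left 2).congr fun n => by ring

lemma hasDerivAt_tsum_pow (a : ℕ → ℝ) (ha : ∀ n, |a n| ≤ (1.7:ℝ)^n) (y : ℝ)
    (hy : y ∈ Set.Ioo (-(0.55:ℝ)) 0.55) :
    HasDerivAt (fun z => ∑' n, a n * z^n) (∑' n, a n * ((n:ℝ) * y^(n-1))) y := by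
  refine hasDerivAt_tsum_of_isPreconnected (g := fun n z => a n * z^n) (g' := fun n z => a n * ((n:ℝ) * z^(n-1))) (y₀ := 0) summable_u_aux isOpen_Ioo
    (convex_Ioo _ _).isPreconnected (fun n z _ => ?_) (fun n z hz => ?_)
    (Set.mem_Ioo.2 ⟨by norm_num, by norm_num⟩) ?_ hy
  · simpa using (hasDerivAt_pow n z).const_mul (a n)
  · refine deriv_bound_aux a ha z ?_ n
    rw [Set.mem_Ioo] at hz; rw [abs_le]; constructor <;> linarith
  · refine summable_of_ne_finset_zero (s := {0}) fun n hn => ?_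
    simp only [Finset.mem_singleton] at hn
    simp [zero_pow hn]
lemma claimA (w c e d : ℕ → ℝ) (hw0 : w 0 = 0) (hw1 : w 1 = 0)
    (hc1 : c 1 = 0) (hc2 : c 2 = w 2) (hc3 : c 3 = w 3)
    (hrec : ∀ n : ℕ, 4 ≤ n → (n:ℝ) * c n = (n:ℝ) * w n
        - ∑ j ∈ Icc 2 (n-2), (j:ℝ) * c j * w (n-j))
    (he : ∀ n, e n = if n = 0 then (1:ℝ) else w n)
    (hd : ∀ n, d n = ((n:ℝ)+1) * c (n+1)) (m : ℕ) :
    ∑ kl ∈ Finset.HasAntidiagonal.antidiagonal m, e kl.1 * d kl.2 = ((m:ℝ)+1) * w (m+1) := by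
  rw [Finset.Nat.sum_antidiagonal_eq_sum_range_succ_mk]
  match m with
  | 0 => simp [Finset.sum_range_succ, he, hd, hw1, hc1]
  | 1 => simp [Finset.sum_range_succ, he, hd, hw1, hc1, hc2]
  | 2 => simp [Finset.sum_range_succ, he, hd, hw1, hc1, hc2, hc3]
  | (m+3) =>
    have hins : range (m+3+1) = insert 0 (Icc 1 (m+3)) := by
      ext k; simp [Finset.mem_Icc]; omega
    rw [hins, Finset.sum_insert (by simp)]
    have h1 : ∑ k ∈ Icc 1 (m+3), e k * d (m+3-k)
        = ∑ k ∈ Icc 2 (m+2), e k * d (m+3-k) := by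
      refine (Finset.sum_subset ?_ ?_).symm
      · intro k hk; rw [Finset.mem_Icc] at *; omega
      · intro k hk hk2
        rw [Finset.mem_Icc] at hk hk2
        rcases (by omega : k = 1 ∨ k = m+3) with rfl | rfl
        · simp [he, hw1]
        · simp [hd, hc1]
    have h2 : ∑ k ∈ Icc 2 (m+2), e k * d (m+3-k)
        = ∑ j ∈ Icc 2 (m+2), (j:ℝ) * c j * w (m+4-j) := by
      refine Finset.sum_nbij' (i := fun k => m+4-k) (j := fun k => m+4-k)
        ?_ ?_ ?_ ?_ ?_
      · intro k hk; rw [Finset.mem_Icc] at *; omega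
      · intro k hk; rw [Finset.mem_Icc] at *; omega
      · intro k hk; rw [Finset.mem_Icc] at hk; omega
      · intro k hk; rw [Finset.mem_Icc] at hk; omega
      · intro k hk
        rw [Finset.mem_Icc] at hk
        rw [he, hd, if_neg (by omega)]
        have e1 : m+3-k+1 = m+4-k := by omega
        have e2 : m+4-(m+4-k) = k := by omega
        rw [e1, e2]
        have e3 : ((m+3-k:ℕ):ℝ) + 1 = ((m+4-k:ℕ):ℝ) := by
          have h1 : k ≤ m+3 := by omega
          have h2 : k ≤ m+4 := by omega
          push_cast [h1, h2]; ring
        rw [e3]; ring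
    rw [h1, h2]
    have hr := hrec (m+4) (by omega)
    have e4 : m+4-2 = m+2 := by omega
    rw [e4] at hr
    have e5 : ∀ j:ℕ, True := fun _ => trivial
    rw [he, hd, if_pos rfl]
    have : ((m+3:ℕ):ℝ) + 1 = ((m+4:ℕ):ℝ) := by push_cast; ring
    push_cast at hr ⊢
    linarith [hr]
lemma keylemma (w c : ℕ → ℝ) (hw0 : w 0 = 0) (hw1 : w 1 = 0) (hwb : ∀ n, |w n| ≤ 1)
    (hc0 : c 0 = 0) (hc1 : c 1 = 0) (hc2 : c 2 = w 2) (hc3 : c 3 = w 3)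
    (hrec : ∀ n : ℕ, 4 ≤ n → (n:ℝ) * c n = (n:ℝ) * w n
        - ∑ j ∈ Finset.Icc 2 (n-2), (j:ℝ) * c j * w (n-j))
    (x : ℝ) (hx0 : 0 ≤ x) (hx : x ≤ 1/2) :
    0 < 1 + ∑' n, w n * x^n ∧
    Real.log (1 + ∑' n, w n * x^n) = ∑' n, c n * x^n := by
  have hone : ∀ n : ℕ, (1:ℝ) ≤ 1.7^n := fun n => one_le_pow₀ (by norm_num)
  have hcb : ∀ n, |c n| ≤ (1.7:ℝ)^n :=
    cbound w c hwb hc0 hc1 (by rw [hc2]; exact hwb 2)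
      (by rw [hc3]; exact hwb 3) hrec
  have hwB : ∀ n, |w n| ≤ (1.7:ℝ)^n := fun n => (hwb n).trans (hone n)
  set e : ℕ → ℝ := fun n => if n = 0 then (1:ℝ) else w n with he
  set d : ℕ → ℝ := fun n => ((n:ℝ)+1) * c (n+1) with hd
  have heB : ∀ n, |e n| ≤ (1.7:ℝ)^n := by
    intro n
    by_cases h : n = 0
    · simp [he, h]
    · simp only [he, if_neg h]; exact hwB n
  set F : ℝ → ℝ := fun y => ∑' n, e n * y^n with hFdef
  set G : ℝ → ℝ := fun y => ∑' n, c n * y^n with hGdef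
  set t : Set ℝ := Set.Ioo (-(0.55:ℝ)) 0.55 with ht
  have hmem : ∀ y ∈ Set.Icc (0:ℝ) x, y ∈ t := by
    intro y hy
    rw [Set.mem_Icc] at hy
    exact Set.mem_Ioo.2 ⟨by linarith, by linarith⟩
  have habs : ∀ y ∈ t, |y| ≤ 0.55 := by
    intro y hy
    rw [Set.mem_Ioo] at hy
    rw [abs_le]; constructor <;> linarith
  -- the ODE : Fd y = F y * Gd y on t
  have hODE : ∀ y ∈ t, (∑' n, e n * ((n:ℝ) * y^(n-1)))
      = F y * (∑' n, c n * ((n:ℝ) * y^(n-1))) := by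
    intro y hy
    have hy' := habs y hy
    -- reindex G'
    have hsG : Summable (fun n => c n * ((n:ℝ) * y^(n-1))) :=
      Summable.of_norm_bounded summable_u_aux (deriv_bound_aux c hcb y hy')
    have hsF : Summable (fun n => e n * ((n:ℝ) * y^(n-1))) :=
      Summable.of_norm_bounded summable_u_aux (deriv_bound_aux e heB y hy')
    have hGr : (∑' n, c n * ((n:ℝ) * y^(n-1))) = ∑' n, d n * y^n := by
      rw [Summable.tsum_eq_zero_add hsG]
      simp only [Nat.cast_zero, zero_mul, mul_zero, zero_add]
      refine tsum_congr fun n => ?_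
      simp only [hd]
      push_cast
      ring_nf
    have hFr : (∑' n, e n * ((n:ℝ) * y^(n-1))) = ∑' n : ℕ, ((n:ℝ)+1) * w (n+1) * y^n := by
      rw [Summable.tsum_eq_zero_add hsF]
      simp only [Nat.cast_zero, zero_mul, mul_zero, zero_add]
      refine tsum_congr fun n => ?_
      simp only [he, if_neg (Nat.succ_ne_zero n)]
      push_cast
      ring_nf
    rw [hGr, hFr]
    have hse : Summable (fun n => ‖e n * y^n‖) := by
      simpa only [Real.norm_eq_abs] using (summable_pow_aux e heB y hy').abs
    have hsd : Summable (fun n => ‖d n * y^n‖) := by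
      refine Summable.of_nonneg_of_le (fun n => norm_nonneg _) (fun n => ?_) summable_u_aux
      have h1 : |d n * y^n| = ((n:ℝ)+1) * |c (n+1)| * |y|^n := by
        rw [abs_mul, abs_pow, hd, abs_mul]
        congr 2
        rw [abs_of_nonneg]; positivity
      rw [Real.norm_eq_abs, h1]
      calc ((n:ℝ)+1) * |c (n+1)| * |y|^n ≤ ((n:ℝ)+1) * 1.7^(n+1) * 0.55^n := by
            refine mul_le_mul (mul_le_mul_of_nonneg_left (hcb _) (by positivity))
              (pow_le_pow_left₀ (abs_nonneg y) hy' n) (by positivity) (by positivity)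
        _ = 1.7 * ((n:ℝ)+1) * (1.7 * 0.55)^n := by rw [mul_pow, pow_succ]; ring
        _ ≤ 2 * ((n:ℝ)+1) * 0.935^n := by
            have : (1.7:ℝ) * 0.55 = 0.935 := by norm_num
            rw [this]
            nlinarith [pow_nonneg (by norm_num : (0:ℝ) ≤ 0.935) n,
              Nat.cast_nonneg (α := ℝ) n]
    rw [hFdef]
    rw [tsum_mul_tsum_eq_tsum_sum_antidiagonal_of_summable_norm hse hsd]
    refine tsum_congr fun m => ?_
    have : ∑ kl ∈ Finset.HasAntidiagonal.antidiagonal m, (e kl.1 * y^kl.1) * (d kl.2 * y^kl.2)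
        = ∑ kl ∈ Finset.HasAntidiagonal.antidiagonal m, (e kl.1 * d kl.2) * y^m := by
      refine Finset.sum_congr rfl fun kl hkl => ?_
      rw [Finset.HasAntidiagonal.mem_antidiagonal] at hkl
      rw [← hkl, pow_add]; ring
    rw [this, ← Finset.sum_mul,
      claimA w c e d hw0 hw1 hc1 hc2 hc3 hrec (fun n => rfl) (fun n => rfl) m]
  -- φ has zero derivative on t
  have hstep : ∀ y ∈ t, HasDerivAt (fun z => Real.exp (-G z) * F z) 0 y := by
    intro y hy
    have hGd := hasDerivAt_tsum_pow c hcb y hy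
    have hFd := hasDerivAt_tsum_pow e heB y hy
    have h1 : HasDerivAt (fun z => Real.exp (-G z))
        (Real.exp (-G y) * -(∑' n, c n * ((n:ℝ) * y^(n-1)))) y := (hGd.neg).exp
    have h2 := h1.mul hFd
    refine h2.congr_deriv ?_
    rw [hODE y hy]
    ring
  -- constancy
  have hxt : x ∈ t := hmem x (Set.mem_Icc.2 ⟨hx0, le_refl x⟩)
  have hconst : Real.exp (-G x) * F x = Real.exp (-G 0) * F 0 := by
    refine constant_of_has_deriv_right_zero (f := fun z => Real.exp (-G z) * F z)
      (a := 0) (b := x) ?_ ?_ x (Set.mem_Icc.2 ⟨hx0, le_refl x⟩)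
    · exact fun y hy => ((hstep y (hmem y hy)).continuousAt).continuousWithinAt
    · intro y hy
      rw [Set.mem_Ico] at hy
      exact (hstep y (hmem y (Set.mem_Icc.2 ⟨hy.1, hy.2.le⟩))).hasDerivWithinAt
  have hG0 : G 0 = 0 := by
    have hg : G 0 = ∑' n : ℕ, c n * (0:ℝ)^n := rfl
    rw [hg, tsum_eq_single 0 (fun b hb => by simp [zero_pow hb])]
    simp [hc0]
  have hF0 : F 0 = 1 := by
    have hf : F 0 = ∑' n : ℕ, e n * (0:ℝ)^n := rfl
    rw [hf, tsum_eq_single 0 (fun b hb => by simp [zero_pow hb])]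
    simp [he]
  rw [hG0, hF0, neg_zero, Real.exp_zero, one_mul] at hconst
  have hFx : F x = Real.exp (G x) := by
    have h2 : Real.exp (G x) * (Real.exp (-G x) * F x) = Real.exp (G x) * 1 := by
      rw [hconst]
    rwa [← mul_assoc, ← Real.exp_add, add_neg_cancel, Real.exp_zero, one_mul,
      mul_one] at h2
  have hxabs : |x| ≤ 0.55 := by rw [abs_le]; constructor <;> linarith
  have hFsplit : F x = 1 + ∑' n, w n * x^n := by
    rw [hFdef]
    have h1 : ∀ n : ℕ, e n * x^n = (if n = 0 then (1:ℝ) else 0) * x^n + w n * x^n := by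
      intro n
      by_cases h : n = 0
      · simp [he, h, hw0]
      · simp [he, h]
    have hs1 : Summable (fun n : ℕ => (if n = 0 then (1:ℝ) else 0) * x^n) := by
      refine summable_of_ne_finset_zero (s := {0}) fun n hn => ?_
      simp only [Finset.mem_singleton] at hn
      simp [hn]
    have hs2 : Summable (fun n => w n * x^n) := summable_pow_aux w hwB x hxabs
    simp only [h1]
    rw [Summable.tsum_add hs1 hs2]
    congr 1
    rw [tsum_eq_single 0 (fun b hb => by simp [hb])]
    simp
  constructor
  · rw [← hFsplit, hFx]; exact Real.exp_pos _
  · rw [← hFsplit, hFx, Real.log_exp]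
lemma tsum_shift2 (a : ℕ → ℝ) (h0 : a 0 = 0) (h1 : a 1 = 0) (hs : Summable a) :
    ∑' n, a n = ∑' n, a (n+2) := by
  rw [Summable.tsum_eq_zero_add hs, h0, zero_add,
    Summable.tsum_eq_zero_add ((summable_nat_add_iff 1).2 hs), h1, zero_add]

lemma primes_summable_sq : Summable (fun p : Nat.Primes => 1/((p:ℕ):ℝ)^2) := by
  have h := Nat.Primes.summable_rpow.mpr (by norm_num : (-2:ℝ) < -1)
  refine h.congr fun p => ?_
  have hp : (0:ℝ) < ((p:ℕ):ℝ) := by exact_mod_cast p.2.pos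
  rw [show ((-2:ℝ)) = -((2:ℕ):ℝ) by norm_num, Real.rpow_neg hp.le,
    Real.rpow_natCast, one_div]

set_option maxHeartbeats 1000000 in
/-- Theorem 2 of the paper: with `u` the characteristic function of
`S ∋ 1`, `v n = u n - u (n-1)`, `P` the prime zeta function, `M_n` the partition
polynomials (given by the recursion `M_2 = M_3 = 0`,
`M_n = -(1/n) ∑_{j=2}^{n-2} j v_{n-j}(v_j + M_j)`), and
`h(E(S)) = ∏_p (1 + ∑_{i≥2} v_i p^{-i})`, we have
`log h(E(S)) = P(2)v_2 + P(3)v_3 + ∑_{n=4}^∞ P(n)(v_n + M_n)`. -/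
theorem stmt14 (S : Set ℕ) (hS1 : (1 : ℕ) ∈ S) (hS0 : ∀ s ∈ S, 1 ≤ s)
    (u v : ℕ → ℝ) (hu : ∀ n, u n = if n ∈ S then 1 else 0)
    (hv : ∀ n ≥ 2, v n = u n - u (n - 1))
    (M : ℕ → ℝ) (hM2 : M 2 = 0) (hM3 : M 3 = 0)
    (hMrec : ∀ n ≥ 4, M n = -(1 / (n : ℝ)) *
      ∑ j ∈ Finset.Icc 2 (n - 2), (j : ℝ) * v (n - j) * (v j + M j))
    (P : ℕ → ℝ) (hP : ∀ n, P n = ∑' p : Nat.Primes, 1 / (p : ℝ) ^ n)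
    (loc : Nat.Primes → ℝ)
    (hloc : ∀ p : Nat.Primes, loc p = 1 + ∑' i : ℕ, v (i + 2) / (p : ℝ) ^ (i + 2)) :
    Real.log (∏' p : Nat.Primes, loc p) =
      P 2 * v 2 + P 3 * v 3 + ∑' n : ℕ, P (n + 4) * (v (n + 4) + M (n + 4)) := by
  have hub : ∀ n, u n = 0 ∨ u n = 1 := by
    intro n; rw [hu]; split <;> simp
  set w : ℕ → ℝ := fun n => if 2 ≤ n then v n else 0 with hwdef
  set c : ℕ → ℝ := fun n => if n < 2 then 0 else if n = 2 then v 2 else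
      if n = 3 then v 3 else v n + M n with hcdef
  have hw0 : w 0 = 0 := by simp [hwdef]
  have hw1 : w 1 = 0 := by simp [hwdef]
  have hwv : ∀ n, 2 ≤ n → w n = v n := fun n hn => by simp [hwdef, hn]
  have hwb : ∀ n, |w n| ≤ 1 := by
    intro n
    by_cases hn : 2 ≤ n
    · rw [hwv n hn, hv n hn]
      rcases hub n with h1 | h1 <;> rcases hub (n-1) with h2 | h2 <;>
        rw [h1, h2] <;> norm_num
    · simp [hwdef, hn]
  have hc0 : c 0 = 0 := by simp [hcdef]
  have hc1 : c 1 = 0 := by simp [hcdef]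
  have hc2v : c 2 = v 2 := by simp [hcdef]
  have hc3v : c 3 = v 3 := by simp [hcdef]
  have hc2 : c 2 = w 2 := by rw [hc2v, hwv 2 le_rfl]
  have hc3 : c 3 = w 3 := by rw [hc3v, hwv 3 (by norm_num)]
  have hcM : ∀ j, 2 ≤ j → c j = v j + M j := by
    intro j hj
    rcases (by omega : j = 2 ∨ j = 3 ∨ 4 ≤ j) with rfl | rfl | h4
    · rw [hc2v, hM2, add_zero]
    · rw [hc3v, hM3, add_zero]
    · simp only [hcdef]
      rw [if_neg (by omega), if_neg (by omega), if_neg (by omega)]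
  have hrec : ∀ n : ℕ, 4 ≤ n → (n:ℝ) * c n = (n:ℝ) * w n
      - ∑ j ∈ Finset.Icc 2 (n-2), (j:ℝ) * c j * w (n-j) := by
    intro n hn
    have hn0 : ((n:ℕ):ℝ) ≠ 0 := by
      have : (4:ℝ) ≤ (n:ℝ) := by exact_mod_cast hn
      linarith
    have hM := hMrec n hn
    have hsum : ∑ j ∈ Finset.Icc 2 (n-2), (j:ℝ) * c j * w (n-j)
        = ∑ j ∈ Finset.Icc 2 (n-2), (j:ℝ) * v (n-j) * (v j + M j) := by
      refine Finset.sum_congr rfl fun j hj => ?_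
      rw [Finset.mem_Icc] at hj
      rw [hcM j hj.1, hwv (n-j) (by omega)]
      ring
    rw [hcM n (by omega), hwv n (by omega), hsum, hM]
    field_simp
    ring
  have hcb : ∀ n, |c n| ≤ (1.7:ℝ)^n := cbound w c hwb hc0 hc1
    (by rw [hc2]; exact hwb 2) (by rw [hc3]; exact hwb 3) hrec
  have hwB : ∀ n, |w n| ≤ (1.7:ℝ)^n :=
    fun n => (hwb n).trans (one_le_pow₀ (by norm_num))
  -- per-prime facts
  have hplt : ∀ p : Nat.Primes, (2:ℝ) ≤ (p:ℝ) := fun p => by exact_mod_cast p.2.two_le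
  have hppos : ∀ p : Nat.Primes, (0:ℝ) < (p:ℝ) :=
    fun p => lt_of_lt_of_le (by norm_num) (hplt p)
  have hx0 : ∀ p : Nat.Primes, (0:ℝ) ≤ 1/(p:ℝ) := fun p => by positivity
  have hxh : ∀ p : Nat.Primes, 1/(p:ℝ) ≤ 1/2 := fun p => by
    rw [div_le_div_iff₀ (hppos p) (by norm_num)]
    linarith [hplt p]
  have hxabs : ∀ p : Nat.Primes, |1/(p:ℝ)| ≤ 0.55 := fun p => by
    rw [abs_of_nonneg (hx0 p)]
    linarith [hxh p]
  have hkey := fun p : Nat.Primes => keylemma w c hw0 hw1 hwb hc0 hc1 hc2 hc3 hrec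
      (1/(p:ℝ)) (hx0 p) (hxh p)
  have hloc2 : ∀ p : Nat.Primes, loc p = 1 + ∑' n, w n * (1/(p:ℝ))^n := by
    intro p
    rw [hloc p]
    congr 1
    rw [tsum_shift2 (fun n => w n * (1/(p:ℝ))^n) (by simp [hw0]) (by simp [hw1])
      (summable_pow_aux w hwB _ (hxabs p))]
    refine (tsum_congr fun n => ?_)
    rw [hwv (n+2) (by omega), div_pow, one_pow, mul_one_div]
  have hpos : ∀ p, 0 < loc p := fun p => by rw [hloc2 p]; exact (hkey p).1
  have hcshift : ∀ p : Nat.Primes,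
      Real.log (loc p) = ∑' n, c (n+2) * (1/(p:ℝ))^(n+2) := by
    intro p
    rw [hloc2 p, (hkey p).2]
    exact tsum_shift2 _ (by simp [hc0]) (by simp [hc1])
      (summable_pow_aux c hcb _ (hxabs p))
  -- double summability over primes × ℕ
  have hgeo : Summable (fun n : ℕ => (0.85:ℝ)^n) :=
    summable_geometric_of_lt_one (by norm_num) (by norm_num)
  have hsq : Summable (fun p : Nat.Primes => (1.7:ℝ)^2 * (1/(p:ℝ))^2) := by
    have := primes_summable_sq.mul_left ((1.7:ℝ)^2)
    refine this.congr fun p => ?_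
    rw [div_pow, one_pow]
  have hdouble : Summable (fun pn : Nat.Primes × ℕ =>
      c (pn.2+2) * (1/((pn.1 : Nat.Primes):ℝ))^(pn.2+2)) := by
    have hprod : Summable (fun pn : Nat.Primes × ℕ =>
        ((1.7:ℝ)^2 * (1/((pn.1 : Nat.Primes):ℝ))^2) * (0.85:ℝ)^pn.2) :=
      hsq.mul_of_nonneg hgeo (by intro p; positivity) (by intro n; positivity)
    refine Summable.of_norm_bounded hprod fun pn => ?_
    obtain ⟨p, n⟩ := pn
    have h1p : (0:ℝ) ≤ 1/(p:ℝ) := hx0 p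
    calc ‖c (n+2) * (1/(p:ℝ))^(n+2)‖ = |c (n+2)| * (1/(p:ℝ))^(n+2) := by
          rw [Real.norm_eq_abs, abs_mul, abs_pow, abs_of_nonneg h1p]
      _ ≤ (1.7:ℝ)^(n+2) * (1/(p:ℝ))^(n+2) := by
          refine mul_le_mul_of_nonneg_right (hcb _) (by positivity)
      _ = ((1.7:ℝ)^2 * (1/(p:ℝ))^2) * ((1.7:ℝ) * (1/(p:ℝ)))^n := by
          rw [mul_pow]; ring
      _ ≤ ((1.7:ℝ)^2 * (1/(p:ℝ))^2) * (0.85:ℝ)^n := by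
          refine mul_le_mul_of_nonneg_left
            (pow_le_pow_left₀ (by positivity) ?_ n) (by positivity)
          have := hxh p
          nlinarith
  have hmarg : ∀ p : Nat.Primes, Summable (fun n => c (n+2) * (1/(p:ℝ))^(n+2)) :=
    fun p => (summable_nat_add_iff 2).2 (summable_pow_aux c hcb _ (hxabs p))
  have hmargp : ∀ n : ℕ, Summable
      (fun p : Nat.Primes => c (n+2) * (1/(p:ℝ))^(n+2)) := by
    intro n
    refine Summable.of_norm_bounded
      ((primes_summable_sq.mul_left ((1.7:ℝ)^(n+2)))) fun p => ?_
    calc ‖c (n+2) * (1/(p:ℝ))^(n+2)‖ = |c (n+2)| * (1/(p:ℝ))^(n+2) := by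
          rw [Real.norm_eq_abs, abs_mul, abs_pow, abs_of_nonneg (hx0 p)]
      _ ≤ (1.7:ℝ)^(n+2) * (1/(p:ℝ))^(n+2) :=
          mul_le_mul_of_nonneg_right (hcb _) (by positivity)
      _ ≤ (1.7:ℝ)^(n+2) * (1/((p:ℕ):ℝ)^2) := by
          refine mul_le_mul_of_nonneg_left ?_ (by positivity)
          rw [div_pow, one_pow]
          refine div_le_div_of_nonneg_left (by norm_num) (pow_pos (hppos p) 2) ?_
          calc ((p:ℕ):ℝ)^2 ≤ ((p:ℕ):ℝ)^(n+2) := by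
                refine pow_le_pow_right₀ ?_ (by omega)
                exact_mod_cast p.2.one_lt.le
            _ = ((p:ℕ):ℝ)^(n+2) := rfl
  -- summability of the n-marginal (via fiberwise sums)
  have hmargsum : Summable (fun n : ℕ =>
      ∑' p : Nat.Primes, c (n+2) * (1/(p:ℝ))^(n+2)) := by
    refine ⟨_, HasSum.prod_fiberwise hdouble.prod_symm.hasSum
      (fun n => (hmargp n).hasSum)⟩
  -- summability of log (loc p)
  have hsl : Summable (fun p : Nat.Primes => Real.log (loc p)) := by
    have h1 : Summable (fun p : Nat.Primes =>
        ∑' n : ℕ, c (n+2) * (1/(p:ℝ))^(n+2)) :=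
      ⟨_, HasSum.prod_fiberwise hdouble.hasSum (fun p => (hmarg p).hasSum)⟩
    exact h1.congr fun p => (hcshift p).symm
  -- log of the product
  have hlogprod : Real.log (∏' p : Nat.Primes, loc p)
      = ∑' p : Nat.Primes, Real.log (loc p) := by
    have h2 := Real.rexp_tsum_eq_tprod (f := loc) hpos hsl
    rw [← h2, Real.log_exp]
  -- Fubini
  have hfub : ∑' p : Nat.Primes, Real.log (loc p)
      = ∑' n : ℕ, c (n+2) * P (n+2) := by
    calc ∑' p : Nat.Primes, Real.log (loc p)
        = ∑' (p : Nat.Primes) (n : ℕ), c (n+2) * (1/(p:ℝ))^(n+2) :=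
          tsum_congr hcshift
      _ = ∑' (n : ℕ) (p : Nat.Primes), c (n+2) * (1/(p:ℝ))^(n+2) :=
          Summable.tsum_comm' hdouble.prod_symm hmargp hmarg
      _ = ∑' n : ℕ, c (n+2) * P (n+2) := by
          refine tsum_congr fun n => ?_
          rw [tsum_mul_left, hP (n+2)]
          congr 1
          refine tsum_congr fun p => ?_
          rw [div_pow, one_pow]
  -- splitting off the first two terms
  have hSfin : Summable (fun n : ℕ => c (n+2) * P (n+2)) := by
    refine hmargsum.congr fun n => ?_
    rw [tsum_mul_left, hP (n+2)]
    congr 1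
    refine tsum_congr fun p => ?_
    rw [div_pow, one_pow]
  have hsplit : ∑' n : ℕ, c (n+2) * P (n+2)
      = c 2 * P 2 + (c 3 * P 3 + ∑' n : ℕ, c (n+4) * P (n+4)) := by
    rw [Summable.tsum_eq_zero_add hSfin,
      Summable.tsum_eq_zero_add ((summable_nat_add_iff 1).2 hSfin)]
  rw [hlogprod, hfub, hsplit, hc2v, hc3v]
  have hrest : ∑' n : ℕ, c (n+4) * P (n+4)
      = ∑' n : ℕ, P (n+4) * (v (n+4) + M (n+4)) :=
    tsum_congr fun n => by rw [hcM (n+4) (by omega)]; ring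
  rw [hrest]
  ring
end

section
/- Let (v_n)_{n≥2} be integers and define t-coefficients for partitions by Corollary 2: for a partition of n+1 encoded by (b_2,…,b_{n+1}) with 2b_2+⋯+(n+1)b_{n+1} = n+1, t = (δ_{b_{n+1},1} + (-1)^{B-1}(B-1)!/(b_2!⋯b_{n-1}!))(n+1) with B = b_2+⋯+b_{n-1} (and the second term interpreted as 0 when B = 0). Then f_{n+1} = ∑_{partitions σ of n+1 with parts ≥ 2} t_σ v_σ, where v_σ = ∏ v_j^{b_j} and f_n are defined by the recurrence f_{n+1} = (n+1)v_{n+1} - ∑_{i=1}^{n-2} v_{n-i} f_{i+1} with f_2 = 2v_2, f_3 = 3v_3. -/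
open Finset

namespace Stmt19Aux

/-- Partitions of `N` with all parts `≥ 2`, as multisets. -/
def pparts (N : ℕ) : Finset (Multiset ℕ) :=
  ((Finset.univ : Finset (Nat.Partition N)).image Nat.Partition.parts).filter
    fun m => ∀ j ∈ m, 2 ≤ j

lemma mem_pparts {N : ℕ} {m : Multiset ℕ} :
    m ∈ pparts N ↔ m.sum = N ∧ ∀ j ∈ m, 2 ≤ j := by
  constructor
  · intro h
    rw [pparts, Finset.mem_filter, Finset.mem_image] at h
    obtain ⟨⟨p, _, rfl⟩, h2⟩ := h
    exact ⟨p.parts_sum, h2⟩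
  · rintro ⟨h1, h2⟩
    rw [pparts, Finset.mem_filter, Finset.mem_image]
    exact ⟨⟨⟨m, fun {i} hi => by have := h2 i hi; omega, h1⟩, Finset.mem_univ _, rfl⟩, h2⟩

lemma two_mul_card_le {m : Multiset ℕ} (h2 : ∀ j ∈ m, 2 ≤ j) :
    2 * Multiset.card m ≤ m.sum := by
  have := Multiset.card_nsmul_le_sum h2
  simpa [mul_comm] using this

lemma sum_eq_add_erase {m : Multiset ℕ} {k : ℕ} (hk : k ∈ m) :
    m.sum = k + (m.erase k).sum := by
  conv_lhs => rw [← Multiset.cons_erase hk]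
  simp

lemma mem_le_sum {m : Multiset ℕ} {k : ℕ} (hk : k ∈ m) : k ≤ m.sum := by
  rw [sum_eq_add_erase hk]; omega

lemma exists_mem_of_sum_pos {m : Multiset ℕ} (h : 0 < m.sum) : ∃ x, x ∈ m := by
  by_contra hc
  push_neg at hc
  have : m = 0 := Multiset.eq_zero_of_forall_notMem hc
  simp [this] at h

/-- If the multiset is not the single-part partition, it has at least two parts. -/
lemma two_le_card {N : ℕ} {m : Multiset ℕ} (hsum : m.sum = N) (hN : 0 < N)
    (hne : m ≠ {N}) : 2 ≤ Multiset.card m := by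
  by_contra h'
  push_neg at h'
  have h0 : m ≠ 0 := by
    intro h0
    rw [h0] at hsum
    simp at hsum
    omega
  have h1 : Multiset.card m = 1 := by
    have := Multiset.card_pos.mpr h0
    omega
  obtain ⟨a, rfl⟩ := Multiset.card_eq_one.mp h1
  simp only [Multiset.sum_singleton] at hsum
  exact hne (by rw [hsum])

/-- Every part of a non-singleton partition into parts `≥ 2` is at most `N - 2`. -/
lemma part_add_two_le {N : ℕ} {m : Multiset ℕ} (hsum : m.sum = N)
    (h2 : ∀ j ∈ m, 2 ≤ j) (hc : 2 ≤ Multiset.card m) {k : ℕ} (hk : k ∈ m) :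
    k + 2 ≤ N := by
  have hcard : 1 ≤ Multiset.card (m.erase k) := by
    rw [Multiset.card_erase_of_mem hk, Nat.pred_eq_sub_one]; omega
  have hpos : 0 < Multiset.card (m.erase k) := by omega
  obtain ⟨x, hx⟩ : ∃ x, x ∈ m.erase k := Multiset.card_pos_iff_exists_mem.mp hpos
  have h2x := h2 x (Multiset.mem_of_mem_erase hx)
  have hxs := mem_le_sum hx
  have := sum_eq_add_erase hk
  omega

/-- The product of factorials of multiplicities. -/
def Dfac (m : Multiset ℕ) : ℕ := ∏ j ∈ m.toFinset, (m.count j).factorial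

lemma Dfac_eq_prod {m : Multiset ℕ} {s : Finset ℕ} (hs : m.toFinset ⊆ s) :
    Dfac m = ∏ j ∈ s, (m.count j).factorial := by
  refine Finset.prod_subset hs fun x _ hx => ?_
  rw [Multiset.count_eq_zero_of_notMem (by simpa using hx)]
  rfl

lemma Dfac_pos (m : Multiset ℕ) : 0 < Dfac m :=
  Finset.prod_pos fun _ _ => Nat.factorial_pos _

lemma Dfac_erase {m : Multiset ℕ} {k : ℕ} (hk : k ∈ m) :
    Dfac m = m.count k * Dfac (m.erase k) := by
  have hsub : (m.erase k).toFinset ⊆ m.toFinset := by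
    intro x hx
    rw [Multiset.mem_toFinset] at hx ⊢
    exact Multiset.mem_of_mem_erase hx
  rw [Dfac_eq_prod hsub, Dfac,
    ← Finset.mul_prod_erase _ _ (Multiset.mem_toFinset.mpr hk),
    ← Finset.mul_prod_erase _ (fun j => ((m.erase k).count j).factorial)
      (Multiset.mem_toFinset.mpr hk)]
  have htail : ∀ j ∈ m.toFinset.erase k,
      ((m.erase k).count j).factorial = (m.count j).factorial := by
    intro j hj
    rw [Multiset.count_erase_of_ne (Finset.ne_of_mem_erase hj)]
  rw [Finset.prod_congr rfl htail, Multiset.count_erase_self, ← mul_assoc,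
    Nat.mul_factorial_pred (Multiset.count_pos.mpr hk).ne']

/-- The `t`-coefficient of a partition. -/
noncomputable def tc (N : ℕ) (m : Multiset ℕ) : ℝ :=
  (-1 : ℝ) ^ (Multiset.card m - 1) * ((Multiset.card m - 1).factorial : ℝ)
    / (Dfac m : ℝ) * N

lemma Dfac_singleton (a : ℕ) : Dfac {a} = 1 := by
  simp [Dfac]

lemma tc_singleton (N a : ℕ) : tc N {a} = N := by
  simp [tc, Dfac_singleton]

lemma sum_toFinset_count_mul {m : Multiset ℕ} :
    ∑ a ∈ m.toFinset, m.count a * a = m.sum := by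
  have := Finset.sum_multiset_map_count m (id : ℕ → ℕ)
  simp only [smul_eq_mul, id] at this
  rw [show Multiset.map (fun x => x) m = m from Multiset.map_id' m] at this
  exact this.symm

/-- The key identity: removing one part at a time. -/
lemma key_identity {N : ℕ} {m : Multiset ℕ} (hsum : m.sum = N)
    (h2 : ∀ j ∈ m, 2 ≤ j) (hc : 2 ≤ Multiset.card m) :
    ∑ k ∈ m.toFinset, tc (N - k) (m.erase k) = - tc N m := by
  obtain ⟨d, hd⟩ : ∃ d, Multiset.card m = d + 2 := ⟨Multiset.card m - 2, by omega⟩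
  have hterm : ∀ k ∈ m.toFinset, tc (N - k) (m.erase k)
      = (-1 : ℝ) ^ d * (d.factorial : ℝ) / (Dfac m : ℝ)
        * ((m.count k : ℝ) * ((N : ℝ) - k)) := by
    intro k hk
    rw [Multiset.mem_toFinset] at hk
    have hkN : k + 2 ≤ N := part_add_two_le hsum h2 hc hk
    have hcard' : Multiset.card (m.erase k) = d + 1 := by
      rw [Multiset.card_erase_of_mem hk, Nat.pred_eq_sub_one]; omega
    have hD := Dfac_erase hk
    have hDm : (Dfac m : ℝ) ≠ 0 := Nat.cast_ne_zero.mpr (Dfac_pos m).ne'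
    have hDe : (Dfac (m.erase k) : ℝ) ≠ 0 := Nat.cast_ne_zero.mpr (Dfac_pos _).ne'
    have hcount : (0 : ℝ) < (m.count k : ℝ) := by
      exact_mod_cast Multiset.count_pos.mpr hk
    rw [tc, hcard']
    simp only [Nat.add_sub_cancel]
    rw [Nat.cast_sub (by omega : k ≤ N)]
    have hDr : (Dfac m : ℝ) = (m.count k : ℝ) * (Dfac (m.erase k) : ℝ) := by
      exact_mod_cast hD
    rw [hDr]
    field_simp
  rw [Finset.sum_congr rfl hterm, ← Finset.mul_sum]
  have e1 : ∑ k ∈ m.toFinset, ((m.count k : ℝ) * ((N : ℝ) - (k : ℝ)))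
      = ((Multiset.card m : ℝ) - 1) * N := by
    have h1 : ∑ k ∈ m.toFinset, m.count k = Multiset.card m :=
      Multiset.toFinset_sum_count_eq m
    have h2' := sum_toFinset_count_mul (m := m)
    rw [hsum] at h2'
    have e2 : ∑ k ∈ m.toFinset, ((m.count k : ℝ) * (k : ℝ)) = (N : ℝ) := by
      exact_mod_cast h2'
    have e3 : ∑ k ∈ m.toFinset, ((m.count k : ℝ)) = (Multiset.card m : ℝ) := by
      exact_mod_cast h1
    calc ∑ k ∈ m.toFinset, ((m.count k : ℝ) * ((N : ℝ) - (k : ℝ)))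
        = (∑ k ∈ m.toFinset, (m.count k : ℝ)) * N
          - ∑ k ∈ m.toFinset, ((m.count k : ℝ) * (k : ℝ)) := by
          rw [Finset.sum_mul, ← Finset.sum_sub_distrib]
          exact Finset.sum_congr rfl fun k _ => by ring
      _ = ((Multiset.card m : ℝ) - 1) * N := by rw [e2, e3]; ring
  rw [e1, tc, hd]
  have h1 : d + 2 - 1 = d + 1 := by omega
  rw [h1]
  push_cast [Nat.factorial_succ, pow_succ]
  ring

lemma pparts_small {N : ℕ} (h1 : 2 ≤ N) (h2 : N ≤ 3) :
    pparts N = {({N} : Multiset ℕ)} := by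
  ext m
  rw [mem_pparts, Finset.mem_singleton]
  constructor
  · rintro ⟨hsum, hp⟩
    by_contra hne
    have hc := two_le_card hsum (by omega) hne
    have := two_mul_card_le hp
    omega
  · rintro rfl
    refine ⟨by simp, fun j hj => ?_⟩
    rw [Multiset.mem_singleton] at hj
    omega

lemma mem_pparts_singleton {N : ℕ} (hN : 2 ≤ N) : ({N} : Multiset ℕ) ∈ pparts N := by
  rw [mem_pparts]
  exact ⟨by simp, fun j hj => by rw [Multiset.mem_singleton] at hj; omega⟩

set_option maxHeartbeats 1000000 in
/-- Lemma A : the explicit partition expansion of `f (n+1)`. -/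
lemma lemA (v : ℕ → ℤ) (f : ℕ → ℝ)
    (hf2 : f 2 = 2 * (v 2 : ℝ)) (hf3 : f 3 = 3 * (v 3 : ℝ))
    (hrec : ∀ n ≥ 1, f (n + 1) = (n + 1) * (v (n + 1) : ℝ) -
      ∑ i ∈ Finset.Icc 1 (n - 2), (v (n - i) : ℝ) * f (i + 1)) :
    ∀ n, 1 ≤ n → f (n + 1) =
      ∑ m ∈ pparts (n + 1), tc (n + 1) m * ((m.map fun j => ((v j : ℝ))).prod) := by
  intro n
  induction n using Nat.strong_induction_on with
  | _ n ih =>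
    intro hn
    rcases Nat.lt_or_ge n 3 with h3 | h3
    · interval_cases n
      · rw [show (1 + 1 : ℕ) = 2 from rfl, pparts_small (by omega) (by omega),
          Finset.sum_singleton, tc_singleton]
        simp only [Multiset.map_singleton, Multiset.prod_singleton]
        rw [hf2]
        push_cast
        ring
      · rw [show (2 + 1 : ℕ) = 3 from rfl, pparts_small (by omega) (by omega),
          Finset.sum_singleton, tc_singleton]
        simp only [Multiset.map_singleton, Multiset.prod_singleton]
        rw [hf3]
        push_cast
        ring
    · -- main inductive step, n ≥ 3
      have hrw : ∀ i ∈ Finset.Icc 1 (n - 2), (v (n - i) : ℝ) * f (i + 1)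
          = ∑ m' ∈ pparts (i + 1),
              (v (n - i) : ℝ) * (tc (i + 1) m' * ((m'.map fun j => ((v j : ℝ))).prod)) := by
        intro i hi
        rw [Finset.mem_Icc] at hi
        rw [ih i (by omega) (by omega), Finset.mul_sum]
      rw [hrec n (by omega), Finset.sum_congr rfl hrw, Finset.sum_sigma']
      have hbij : ∑ x ∈ (Finset.Icc 1 (n - 2)).sigma (fun i => pparts (i + 1)),
            ((v (n - x.1) : ℝ) * (tc (x.1 + 1) x.2 * ((x.2.map fun j => ((v j : ℝ))).prod)))
          = ∑ y ∈ ((pparts (n + 1)).erase {(n + 1 : ℕ)}).sigma (fun m => m.toFinset),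
            ((v y.2 : ℝ) * (tc (n + 1 - y.2) (y.1.erase y.2)
              * (((y.1.erase y.2).map fun j => ((v j : ℝ))).prod))) := by
        refine Finset.sum_bij'
          (fun x _ => (⟨(n - x.1) ::ₘ x.2, n - x.1⟩ : Σ _ : Multiset ℕ, ℕ))
          (fun y _ => (⟨n - y.2, y.1.erase y.2⟩ : Σ _ : ℕ, Multiset ℕ))
          ?_ ?_ ?_ ?_ ?_
        · rintro ⟨i, m'⟩ hx
          dsimp only
          simp only [Finset.mem_sigma, Finset.mem_Icc] at hx
          obtain ⟨⟨hi1, hi2⟩, hm'⟩ := hx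
          rw [mem_pparts] at hm'
          obtain ⟨hsum', hp'⟩ := hm'
          simp only [Finset.mem_sigma, Finset.mem_erase]
          rw [mem_pparts]
          refine ⟨⟨?_, ?_, ?_⟩, ?_⟩
          · intro hcontra
            have hcard := congrArg Multiset.card hcontra
            simp only [Multiset.card_cons, Multiset.card_singleton] at hcard
            have : m' = 0 := Multiset.card_eq_zero.mp (by omega)
            rw [this] at hsum'
            simp at hsum'
          · simp only [Multiset.sum_cons]
            omega
          · intro j hj
            rcases Multiset.mem_cons.mp hj with rfl | hj
            · omega
            · exact hp' j hj
          · simp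
        · rintro ⟨m, k⟩ hy
          dsimp only
          simp only [Finset.mem_sigma, Finset.mem_erase, mem_pparts] at hy
          obtain ⟨⟨hne, hsum, hp⟩, hk⟩ := hy
          rw [Multiset.mem_toFinset] at hk
          have hc := two_le_card hsum (by omega) hne
          have hkN := part_add_two_le hsum hp hc hk
          have hk2 := hp k hk
          simp only [Finset.mem_sigma, Finset.mem_Icc]
          rw [mem_pparts]
          have hsa := sum_eq_add_erase hk
          refine ⟨⟨by omega, by omega⟩, by omega, fun j hj => hp j (Multiset.mem_of_mem_erase hj)⟩
        · rintro ⟨i, m'⟩ hx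
          dsimp only
          simp only [Finset.mem_sigma, Finset.mem_Icc] at hx
          have h1 : n - (n - i) = i := by omega
          simp only [Multiset.erase_cons_head, h1]
        · rintro ⟨m, k⟩ hy
          dsimp only
          simp only [Finset.mem_sigma, Finset.mem_erase, mem_pparts] at hy
          obtain ⟨⟨hne, hsum, hp⟩, hk⟩ := hy
          rw [Multiset.mem_toFinset] at hk
          have hc := two_le_card hsum (by omega) hne
          have hkN := part_add_two_le hsum hp hc hk
          have h1 : n - (n - k) = k := by omega
          simp only [h1, Multiset.cons_erase hk]
        · rintro ⟨i, m'⟩ hx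
          dsimp only
          simp only [Finset.mem_sigma, Finset.mem_Icc] at hx
          have h1 : n + 1 - (n - i) = i + 1 := by omega
          simp only [Multiset.erase_cons_head, h1]
      rw [hbij, Finset.sum_sigma]
      have hinner : ∀ m ∈ (pparts (n + 1)).erase {(n + 1 : ℕ)},
          (∑ k ∈ m.toFinset, (v k : ℝ) * (tc (n + 1 - k) (m.erase k)
              * (((m.erase k).map fun j => ((v j : ℝ))).prod)))
          = - (tc (n + 1) m * ((m.map fun j => ((v j : ℝ))).prod)) := by
        intro m hm
        rw [Finset.mem_erase, mem_pparts] at hm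
        obtain ⟨hne, hsum, hp⟩ := hm
        have hc := two_le_card hsum (by omega) hne
        have hstep : ∀ k ∈ m.toFinset, (v k : ℝ) * (tc (n + 1 - k) (m.erase k)
            * (((m.erase k).map fun j => ((v j : ℝ))).prod))
            = tc (n + 1 - k) (m.erase k) * ((m.map fun j => ((v j : ℝ))).prod) := by
          intro k hk
          rw [Multiset.mem_toFinset] at hk
          have : (m.map fun j => ((v j : ℝ))).prod
              = (v k : ℝ) * ((m.erase k).map fun j => ((v j : ℝ))).prod := by
            conv_lhs => rw [← Multiset.cons_erase hk]
            rw [Multiset.map_cons, Multiset.prod_cons]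
          rw [this]
          ring
        rw [Finset.sum_congr rfl hstep, ← Finset.sum_mul, key_identity hsum hp hc]
        ring
      rw [Finset.sum_congr rfl hinner, Finset.sum_neg_distrib]
      rw [← Finset.add_sum_erase (pparts (n + 1))
        (fun m => tc (n + 1) m * ((m.map fun j => ((v j : ℝ))).prod))
        (mem_pparts_singleton (by omega))]
      rw [tc_singleton]
      simp only [Multiset.map_singleton, Multiset.prod_singleton]
      push_cast
      ring

/-- The multiset associated to a multiplicity vector. -/
def bm (n : ℕ) (b : Fin (n + 2) → ℕ) : Multiset ℕ :=
  ∑ j : Fin (n + 2), Multiset.replicate (b j) (j : ℕ)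

lemma count_bm (n : ℕ) (b : Fin (n + 2) → ℕ) (j : Fin (n + 2)) :
    (bm n b).count (j : ℕ) = b j := by
  rw [bm, Multiset.count_sum']
  rw [Finset.sum_eq_single j]
  · rw [Multiset.count_replicate, if_pos rfl]
  · intro i _ hij
    rw [Multiset.count_replicate, if_neg (fun h => hij (Fin.val_injective h))]
  · simp

lemma mem_bm {n : ℕ} {b : Fin (n + 2) → ℕ} {x : ℕ} (hx : x ∈ bm n b) :
    ∃ j : Fin (n + 2), x = (j : ℕ) ∧ b j ≠ 0 := by
  rw [bm, Multiset.mem_sum] at hx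
  obtain ⟨j, _, hj⟩ := hx
  rw [Multiset.eq_of_mem_replicate hj]
  exact ⟨j, rfl, by
    intro h0
    rw [h0] at hj
    simp at hj⟩

lemma sum_bm (n : ℕ) (b : Fin (n + 2) → ℕ) :
    (bm n b).sum = ∑ j : Fin (n + 2), (j : ℕ) * b j := by
  rw [bm, Multiset.sum_sum]
  exact Finset.sum_congr rfl fun j _ => by
    rw [Multiset.sum_replicate, smul_eq_mul, mul_comm]

lemma mem_top {N : ℕ} {m : Multiset ℕ} (hsum : m.sum = N) (h2 : ∀ j ∈ m, 2 ≤ j)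
    (hN : N ∈ m) : m = {N} := by
  have h := sum_eq_add_erase hN
  have he : m.erase N = 0 := by
    by_contra h0
    obtain ⟨x, hx⟩ := Multiset.exists_mem_of_ne_zero h0
    have := h2 x (Multiset.mem_of_mem_erase hx)
    have := mem_le_sum hx
    omega
  conv_lhs => rw [← Multiset.cons_erase hN, he]
  rfl

lemma part_le_sub_one {n : ℕ} {m : Multiset ℕ} (hsum : m.sum = n + 1)
    (h2 : ∀ j ∈ m, 2 ≤ j) (hne : m ≠ {n + 1}) {k : ℕ} (hk : k ∈ m) :
    k ≤ n - 1 := by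
  have hc := two_le_card hsum (by omega) hne
  have := part_add_two_le hsum h2 hc hk
  omega

lemma count_top_eq_zero {n : ℕ} {m : Multiset ℕ} (hsum : m.sum = n + 1)
    (h2 : ∀ j ∈ m, 2 ≤ j) (hne : m ≠ {n + 1}) : m.count (n + 1) = 0 :=
  Multiset.count_eq_zero_of_notMem fun h => hne (mem_top hsum h2 h)

lemma bsum_eq_card {n : ℕ} {m : Multiset ℕ} (hsum : m.sum = n + 1)
    (h2 : ∀ j ∈ m, 2 ≤ j) (hne : m ≠ {n + 1}) :
    (∑ j ∈ Finset.univ.filter (fun j : Fin (n + 2) => (j : ℕ) ≤ n - 1), m.count (j : ℕ))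
      = Multiset.card m := by
  have hstep : (∑ j ∈ Finset.univ.filter (fun j : Fin (n + 2) => (j : ℕ) ≤ n - 1),
      m.count (j : ℕ)) = ∑ j : Fin (n + 2), m.count (j : ℕ) := by
    refine Finset.sum_subset (Finset.filter_subset _ _) fun j _ hj => ?_
    rw [Finset.mem_filter] at hj
    push_neg at hj
    refine Multiset.count_eq_zero_of_notMem fun hmem => ?_
    have := part_le_sub_one hsum h2 hne hmem
    exact absurd this (by simpa using hj (Finset.mem_univ j))
  rw [hstep, Fin.sum_univ_eq_sum_range (fun j => m.count j) (n + 2)]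
  refine Multiset.sum_count_eq_card fun a ha => ?_
  rw [Finset.mem_range]
  have := part_le_sub_one hsum h2 hne ha
  omega

lemma bprod_eq_Dfac {n : ℕ} {m : Multiset ℕ} (hsum : m.sum = n + 1)
    (h2 : ∀ j ∈ m, 2 ≤ j) (hne : m ≠ {n + 1}) :
    (∏ j ∈ Finset.univ.filter (fun j : Fin (n + 2) => (j : ℕ) ≤ n - 1),
      (m.count (j : ℕ)).factorial) = Dfac m := by
  have hstep : (∏ j ∈ Finset.univ.filter (fun j : Fin (n + 2) => (j : ℕ) ≤ n - 1),
      (m.count (j : ℕ)).factorial) = ∏ j : Fin (n + 2), (m.count (j : ℕ)).factorial := by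
    refine Finset.prod_subset (Finset.filter_subset _ _) fun j _ hj => ?_
    rw [Finset.mem_filter] at hj
    push_neg at hj
    have hc : m.count (j : ℕ) = 0 := by
      refine Multiset.count_eq_zero_of_notMem fun hmem => ?_
      have := part_le_sub_one hsum h2 hne hmem
      exact absurd this (by simpa using hj (Finset.mem_univ j))
    rw [hc]
    rfl
  rw [hstep, Fin.prod_univ_eq_prod_range (fun j => (m.count j).factorial) (n + 2)]
  refine (Dfac_eq_prod fun a ha => ?_).symm
  rw [Multiset.mem_toFinset] at ha
  rw [Finset.mem_range]
  have := mem_le_sum ha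
  omega

lemma vprod_eq {n : ℕ} (g : ℕ → ℝ) {m : Multiset ℕ} (hsub : ∀ a ∈ m, a < n + 2) :
    (∏ j : Fin (n + 2), g (j : ℕ) ^ m.count (j : ℕ)) = (m.map g).prod := by
  rw [Finset.prod_multiset_map_count m g,
    Fin.prod_univ_eq_prod_range (fun j => g j ^ m.count j) (n + 2)]
  refine (Finset.prod_subset (fun a ha => ?_) fun a _ ha => ?_).symm
  · rw [Multiset.mem_toFinset] at ha
    rw [Finset.mem_range]
    exact hsub a ha
  · rw [Multiset.count_eq_zero_of_notMem (by simpa using ha), pow_zero]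

lemma bm_count_eq {n : ℕ} {m : Multiset ℕ} (hsub : ∀ a ∈ m, a < n + 2) :
    bm n (fun j : Fin (n + 2) => m.count (j : ℕ)) = m := by
  rw [bm]
  rw [Fin.sum_univ_eq_sum_range (fun j => Multiset.replicate (m.count j) j) (n + 2)]
  have hstep : ∑ j ∈ Finset.range (n + 2), Multiset.replicate (m.count j) j
      = ∑ j ∈ m.toFinset, Multiset.replicate (m.count j) j := by
    refine (Finset.sum_subset (fun a ha => ?_) fun a _ ha => ?_).symm
    · rw [Multiset.mem_toFinset] at ha
      rw [Finset.mem_range]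
      exact hsub a ha
    · rw [Multiset.count_eq_zero_of_notMem (by simpa using ha)]
      rfl
  rw [hstep]
  calc ∑ j ∈ m.toFinset, Multiset.replicate (m.count j) j
      = ∑ j ∈ m.toFinset, m.count j • ({j} : Multiset ℕ) :=
        Finset.sum_congr rfl fun a _ => (Multiset.nsmul_singleton a _).symm
    _ = m := Multiset.toFinset_sum_count_nsmul_eq m

end Stmt19Aux

/-- For integers `v_n` and `f` defined by `f_2 = 2v_2`, `f_3 = 3v_3`,
`f_{n+1} = (n+1)v_{n+1} - ∑_{i=1}^{n-2} v_{n-i} f_{i+1}`, for each `n ≥ 3` we have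
`f_{n+1} = ∑_{σ} t_σ v_σ`, the sum being over partitions `σ = (b_2,…,b_{n+1})` of
`n+1` with parts `≥ 2` (`∑ j b_j = n+1`), where `v_σ = ∏ v_j^{b_j}` and
`t_σ = (δ_{b_{n+1},1} + (-1)^{B-1}(B-1)!/(b_2!⋯b_{n-1}!))(n+1)` with
`B = b_2 + ⋯ + b_{n-1}` (the second term read as `0` when `B = 0`). -/
theorem stmt19 (v : ℕ → ℤ) (f : ℕ → ℝ)
    (hf2 : f 2 = 2 * (v 2 : ℝ)) (hf3 : f 3 = 3 * (v 3 : ℝ))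
    (hrec : ∀ n ≥ 1, f (n + 1) = (n + 1) * (v (n + 1) : ℝ) -
      ∑ i ∈ Finset.Icc 1 (n - 2), (v (n - i) : ℝ) * f (i + 1)) :
    ∀ n ≥ 3, f (n + 1) =
      ∑ b ∈ (Fintype.piFinset fun _ : Fin (n + 2) => Finset.range (n + 2)).filter
          (fun b : Fin (n + 2) → ℕ =>
            (∑ j : Fin (n + 2), (j : ℕ) * b j = n + 1) ∧
            ∀ j : Fin (n + 2), (j : ℕ) < 2 → b j = 0),
        ((if b (Fin.last (n + 1)) = 1 then (1 : ℝ) else 0) +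
          (if (∑ j ∈ Finset.univ.filter (fun j : Fin (n + 2) => (j : ℕ) ≤ n - 1), b j) = 0
            then (0 : ℝ)
            else (-1 : ℝ) ^
                ((∑ j ∈ Finset.univ.filter (fun j : Fin (n + 2) => (j : ℕ) ≤ n - 1), b j) - 1) *
              ((∑ j ∈ Finset.univ.filter (fun j : Fin (n + 2) => (j : ℕ) ≤ n - 1), b j) - 1).factorial /
              (∏ j ∈ Finset.univ.filter (fun j : Fin (n + 2) => (j : ℕ) ≤ n - 1),
                (b j).factorial : ℕ))) * ((n : ℝ) + 1) *
          ∏ j : Fin (n + 2), (v (j : ℕ) : ℝ) ^ b j := by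
  intro n hn
  rw [Stmt19Aux.lemA v f hf2 hf3 hrec n (by omega)]
  refine Finset.sum_bij'
    (fun m _ => fun j : Fin (n + 2) => m.count (j : ℕ))
    (fun b _ => Stmt19Aux.bm n b)
    ?_ ?_ ?_ ?_ ?_
  · intro m hm
    rw [Stmt19Aux.mem_pparts] at hm
    obtain ⟨hsum, h2⟩ := hm
    have hsub : ∀ a ∈ m, a < n + 2 := fun a ha => by
      have := Stmt19Aux.mem_le_sum ha; omega
    rw [Finset.mem_filter]
    refine ⟨?_, ?_, ?_⟩
    · rw [Fintype.mem_piFinset]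
      intro j
      rw [Finset.mem_range]
      have h1 := Multiset.count_le_card (j : ℕ) m
      have h2' := Stmt19Aux.two_mul_card_le h2
      omega
    · have e := Stmt19Aux.sum_bm n (fun j : Fin (n + 2) => m.count (j : ℕ))
      rw [Stmt19Aux.bm_count_eq hsub, hsum] at e
      exact e.symm
    · intro j hj
      refine Multiset.count_eq_zero_of_notMem fun hmem => ?_
      have := h2 _ hmem
      omega
  · intro b hb
    rw [Finset.mem_filter] at hb
    obtain ⟨_, hsum, h2⟩ := hb
    rw [Stmt19Aux.mem_pparts, Stmt19Aux.sum_bm]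
    refine ⟨hsum, fun x hx => ?_⟩
    obtain ⟨j, rfl, hj0⟩ := Stmt19Aux.mem_bm hx
    by_contra h
    exact hj0 (h2 j (by omega))
  · intro m hm
    rw [Stmt19Aux.mem_pparts] at hm
    obtain ⟨hsum, h2⟩ := hm
    exact Stmt19Aux.bm_count_eq fun a ha => by
      have := Stmt19Aux.mem_le_sum ha; omega
  · intro b _
    funext j
    exact Stmt19Aux.count_bm n b j
  · intro m hm
    rw [Stmt19Aux.mem_pparts] at hm
    obtain ⟨hsum, h2⟩ := hm
    have hsub : ∀ a ∈ m, a < n + 2 := fun a ha => by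
      have := Stmt19Aux.mem_le_sum ha; omega
    dsimp only
    rw [Stmt19Aux.vprod_eq (fun j => ((v j : ℝ))) hsub]
    by_cases hne : m = {n + 1}
    · subst hne
      have hlast : ((Fin.last (n + 1) : Fin (n + 2)) : ℕ) = n + 1 := Fin.val_last _
      simp only [hlast]
      rw [if_pos (by rw [Multiset.count_singleton, if_pos rfl])]
      have hB : (∑ j ∈ Finset.univ.filter (fun j : Fin (n + 2) => (j : ℕ) ≤ n - 1),
          Multiset.count (j : ℕ) ({n + 1} : Multiset ℕ)) = 0 := by
        refine Finset.sum_eq_zero fun j hj => ?_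
        rw [Finset.mem_filter] at hj
        rw [Multiset.count_singleton, if_neg (by omega)]
      rw [hB, if_pos rfl, Stmt19Aux.tc_singleton]
      push_cast
      ring
    · have hlast : ((Fin.last (n + 1) : Fin (n + 2)) : ℕ) = n + 1 := Fin.val_last _
      simp only [hlast]
      rw [Stmt19Aux.count_top_eq_zero hsum h2 hne,
        Stmt19Aux.bsum_eq_card hsum h2 hne, Stmt19Aux.bprod_eq_Dfac hsum h2 hne]
      have hm0 : m ≠ 0 := by
        intro h0
        rw [h0] at hsum
        simp at hsum
      have hcard : Multiset.card m ≠ 0 := by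
        simpa using fun h => hm0 (Multiset.card_eq_zero.mp h)
      rw [if_neg (by omega), if_neg hcard, Stmt19Aux.tc]
      push_cast
      ring
end
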